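/- arXiv:2510.13576 — 3 statements merged into one kernel-verified Lean document; each statement's English description precedes it below -/
import Mathlib

section
/- Let N ≥ 2 be an integer, let p, q be real exponents with 1 < q < N and q < p, and let m satisfy p-1 < m < N(q-1)/(N-1). If u ∈ C¹(ℝ^N) is positive and satisfies -Δ_p u - Δ_q u ≥ |∇u|^m weakly in ℝ^N, then u is constant. -/
open MeasureTheory Filter Metric

noncomputable section

section AuxLemmas

lemma young_quarter {s t : ℝ} (hst : Real.HolderConjugate s t) (X Y : ℝ)
    (hX : 0 ≤ X) (hY : 0 ≤ Y) :
    X * Y ≤ (1/4) * X ^ s + (4:ℝ) ^ (t/s) * Y ^ t := by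
  have hs1 : 1 < s := (Real.holderConjugate_iff.mp hst).1
  have ht1 : 1 < t := (Real.holderConjugate_iff.mp hst.symm).1
  have hs0 : (0:ℝ) < s := by linarith
  have ht0 : (0:ℝ) < t := by linarith
  set l : ℝ := (4:ℝ) ^ (-(1/s)) with hl
  have hlpos : 0 < l := Real.rpow_pos_of_pos (by norm_num) _
  have h1 : X * Y = (l * X) * (l⁻¹ * Y) := by field_simp
  have h2 : (l * X) * (l⁻¹ * Y) ≤ (l * X) ^ s / s + (l⁻¹ * Y) ^ t / t :=
    Real.young_inequality_of_nonneg (by positivity) (by positivity) hst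
  have h3 : (l * X) ^ s / s ≤ (l * X) ^ s :=
    div_le_self (Real.rpow_nonneg (by positivity) _) hs1.le
  have h4 : (l⁻¹ * Y) ^ t / t ≤ (l⁻¹ * Y) ^ t :=
    div_le_self (Real.rpow_nonneg (by positivity) _) ht1.le
  have h5 : (l * X) ^ s = (1/4) * X ^ s := by
    rw [Real.mul_rpow hlpos.le hX, hl, ← Real.rpow_mul (by norm_num : (0:ℝ) ≤ 4)]
    have : -(1/s) * s = -1 := by field_simp
    rw [this, Real.rpow_neg_one]
    norm_num
  have h6 : (l⁻¹ * Y) ^ t = (4:ℝ) ^ (t/s) * Y ^ t := by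
    rw [Real.mul_rpow (by positivity) hY, hl, ← Real.rpow_neg (by norm_num : (0:ℝ) ≤ 4),
      neg_neg, ← Real.rpow_mul (by norm_num : (0:ℝ) ≤ 4)]
    rw [one_div, inv_mul_eq_div]
  rw [h1]
  calc (l * X) * (l⁻¹ * Y) ≤ (l * X) ^ s / s + (l⁻¹ * Y) ^ t / t := h2
    _ ≤ (l * X) ^ s + (l⁻¹ * Y) ^ t := add_le_add h3 h4
    _ = (1/4) * X ^ s + (4:ℝ) ^ (t/s) * Y ^ t := by rw [h5, h6]

/-- Pointwise Caccioppoli-type bound used in the Liouville proof. -/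
lemma pointwise_bound (m r : ℝ) (hr : 1 < r) (hrm : r - 1 < m) (κ : ℝ)
    (hκ : m / (m - r + 1) < κ) (a t d z : ℝ) (ha : 0 ≤ a) (ht0 : 0 ≤ t) (ht1 : t ≤ 1)
    (hd : 0 ≤ d) (hz : z ≤ a * (κ * t ^ (κ - 1) * d)) :
    a ^ (r - 2) * z ≤
      (1/4) * (a ^ m * t ^ κ) +
        (4:ℝ) ^ ((m / (m - r + 1)) / (m / (r - 1))) * (κ * d) ^ (m / (m - r + 1)) := by
  have hr1 : (0:ℝ) < r - 1 := by linarith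
  have hmr : (0:ℝ) < m - r + 1 := by linarith
  have hm0 : (0:ℝ) < m := by linarith
  have ht'1 : 1 < m / (m - r + 1) := (one_lt_div hmr).2 (by linarith)
  have hκ1 : 1 < κ := lt_trans ht'1 hκ
  have hκ0 : (0:ℝ) < κ := by linarith
  have hRHSpos : 0 ≤ (1/4) * (a ^ m * t ^ κ) +
      (4:ℝ) ^ ((m / (m - r + 1)) / (m / (r - 1))) * (κ * d) ^ (m / (m - r + 1)) := by
    have := Real.rpow_nonneg ha m
    have := Real.rpow_nonneg ht0 κ
    have := Real.rpow_nonneg (by positivity : (0:ℝ) ≤ (4:ℝ)) ((m / (m - r + 1)) / (m / (r - 1)))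
    have := Real.rpow_nonneg (by positivity : (0:ℝ) ≤ κ * d) (m / (m - r + 1))
    positivity
  rcases eq_or_lt_of_le ha with ha0 | hapos
  · have hz0 : z ≤ 0 := by
      have : a * (κ * t ^ (κ - 1) * d) = 0 := by rw [← ha0]; ring
      linarith [hz, this]
    have : a ^ (r - 2) * z ≤ 0 :=
      mul_nonpos_of_nonneg_of_nonpos (Real.rpow_nonneg ha _) hz0
    linarith
  rcases eq_or_lt_of_le ht0 with ht0' | htpos
  · have htk : (t : ℝ) ^ (κ - 1) = 0 := by
      rw [← ht0']; exact Real.zero_rpow (by linarith)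
    have hz0 : z ≤ 0 := by
      have : a * (κ * t ^ (κ - 1) * d) = 0 := by rw [htk]; ring
      linarith [hz, this]
    have : a ^ (r - 2) * z ≤ 0 :=
      mul_nonpos_of_nonneg_of_nonpos (Real.rpow_nonneg ha _) hz0
    linarith
  set s : ℝ := m / (r - 1) with hs_def
  set t' : ℝ := m / (m - r + 1) with ht'_def
  have hconj : Real.HolderConjugate s t' := by
    rw [Real.holderConjugate_iff]
    constructor
    · exact (one_lt_div hr1).2 hrm
    · rw [hs_def, ht'_def]
      field_simp
      ring
  have he2 : 0 < κ - 1 - κ * (r - 1) / m := by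
    rw [div_lt_iff₀ hmr] at hκ
    rw [sub_pos, div_lt_iff₀ hm0]
    nlinarith
  set X : ℝ := a ^ (r - 1) * t ^ (κ * (r - 1) / m) with hX_def
  set Y : ℝ := (κ * d) * t ^ (κ - 1 - κ * (r - 1) / m) with hY_def
  have hXnn : 0 ≤ X := by positivity
  have hYnn : 0 ≤ Y := by positivity
  have step1 : a ^ (r - 2) * z ≤ a ^ (r - 1) * (κ * t ^ (κ - 1) * d) := by
    have h1 : a ^ (r - 2) * z ≤ a ^ (r - 2) * (a * (κ * t ^ (κ - 1) * d)) :=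
      mul_le_mul_of_nonneg_left hz (Real.rpow_nonneg ha _)
    have h2 : a ^ (r - 2) * (a * (κ * t ^ (κ - 1) * d))
        = a ^ (r - 1) * (κ * t ^ (κ - 1) * d) := by
      rw [show a ^ (r - 2) * (a * (κ * t ^ (κ - 1) * d))
          = (a ^ (r - 2) * a ^ (1:ℝ)) * (κ * t ^ (κ - 1) * d) by
            rw [Real.rpow_one]; ring]
      rw [← Real.rpow_add hapos]
      ring_nf
    linarith [h1, h2.le]
  have step2 : a ^ (r - 1) * (κ * t ^ (κ - 1) * d) = X * Y := by
    rw [hX_def, hY_def]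
    have heq : t ^ (κ * (r - 1) / m) * t ^ (κ - 1 - κ * (r - 1) / m) = t ^ (κ - 1) := by
      rw [← Real.rpow_add htpos]; ring_nf
    calc a ^ (r - 1) * (κ * t ^ (κ - 1) * d)
        = (a ^ (r - 1) * (κ * d)) * t ^ (κ - 1) := by ring
      _ = (a ^ (r - 1) * (κ * d)) * (t ^ (κ * (r - 1) / m) * t ^ (κ - 1 - κ * (r - 1) / m)) := by
          rw [heq]
      _ = _ := by ring
  have step3 : X * Y ≤ (1/4) * X ^ s + (4:ℝ) ^ (t'/s) * Y ^ t' :=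
    young_quarter hconj X Y hXnn hYnn
  have hXs : X ^ s = a ^ m * t ^ κ := by
    rw [hX_def, Real.mul_rpow (Real.rpow_nonneg ha _) (Real.rpow_nonneg ht0 _)]
    rw [← Real.rpow_mul ha, ← Real.rpow_mul ht0]
    have e1 : (r - 1) * s = m := by rw [hs_def]; field_simp
    have e2 : κ * (r - 1) / m * s = κ := by
      rw [hs_def]; field_simp
    rw [e1, e2]
  have hYt' : Y ^ t' ≤ (κ * d) ^ t' := by
    rw [hY_def, Real.mul_rpow (by positivity) (Real.rpow_nonneg ht0 _)]
    have h1 : (t ^ (κ - 1 - κ * (r - 1) / m)) ^ t' ≤ 1 := by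
      apply Real.rpow_le_one (Real.rpow_nonneg ht0 _)
        (Real.rpow_le_one ht0 ht1 he2.le) (by positivity)
    nlinarith [Real.rpow_nonneg (by positivity : (0:ℝ) ≤ κ * d) t',
      Real.rpow_nonneg (Real.rpow_nonneg ht0 (κ - 1 - κ * (r - 1) / m)) t']
  calc a ^ (r - 2) * z ≤ X * Y := by rw [← step2]; exact step1
    _ ≤ (1/4) * X ^ s + (4:ℝ) ^ (t'/s) * Y ^ t' := step3
    _ ≤ (1/4) * (a ^ m * t ^ κ) + (4:ℝ) ^ (t'/s) * (κ * d) ^ t' := by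
        rw [hXs]
        have h4 : (0:ℝ) ≤ (4:ℝ) ^ (t'/s) := Real.rpow_nonneg (by norm_num) _
        nlinarith
    _ = _ := by rw [ht'_def, hs_def]

variable {F : Type*} [NormedAddCommGroup F] [InnerProductSpace ℝ F] [CompleteSpace F]

lemma continuous_gradient_of_contDiff {f : F → ℝ} (hf : ContDiff ℝ 1 f) :
    Continuous (gradient f) := by
  have : gradient f = fun x => (InnerProductSpace.toDual ℝ F).symm (fderiv ℝ f x) := rfl
  rw [this]
  exact (LinearIsometryEquiv.continuous _).comp (hf.continuous_fderiv one_ne_zero)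

lemma norm_gradient_eq (f : F → ℝ) (x : F) : ‖gradient f x‖ = ‖fderiv ℝ f x‖ :=
  LinearIsometryEquiv.norm_map _ _

lemma gradient_eq_smul_gradient {f g : F → ℝ} {x : F} {c : ℝ}
    (h : fderiv ℝ f x = c • fderiv ℝ g x) : gradient f x = c • gradient g x := by
  unfold gradient
  rw [h, _root_.map_smul]

lemma gradient_eq_zero_of_nmem_tsupport {f : F → ℝ} {x : F} (h : x ∉ tsupport f) :
    gradient f x = 0 := by
  unfold gradient
  have : fderiv ℝ f x = 0 :=
    Function.notMem_support.mp (fun hs => h (support_fderiv_subset ℝ hs))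
  rw [this, _root_.map_zero]

lemma rpow_sub_two_mul {r a : ℝ} (hr : 1 < r) (ha : 0 ≤ a) :
    a ^ (r - 2) * a = a ^ (r - 1) := by
  rcases eq_or_lt_of_le ha with h0 | hpos
  · rw [← h0, mul_zero, eq_comm]
    exact Real.zero_rpow (by linarith : r - 1 ≠ 0)
  · nth_rewrite 2 [← Real.rpow_one a]
    rw [← Real.rpow_add hpos]
    ring_nf

end AuxLemmas

/-- `u` satisfies `-Δ_p u - Δ_q u ≥ f` weakly in `Ω`: for every nonnegative
`φ ∈ C¹_c(Ω)`, `∫_Ω |∇u|^{p-2} ∇u·∇φ + ∫_Ω |∇u|^{q-2} ∇u·∇φ ≥ ∫_Ω f φ`. -/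
def WeakPQSuper (N : ℕ) (p q : ℝ) (Ω : Set (EuclideanSpace ℝ (Fin N)))
    (u f : EuclideanSpace ℝ (Fin N) → ℝ) : Prop :=
  ∀ φ : EuclideanSpace ℝ (Fin N) → ℝ,
    ContDiff ℝ 1 φ → HasCompactSupport φ → tsupport φ ⊆ Ω → (∀ x, 0 ≤ φ x) →
    ∫ x in Ω, f x * φ x ≤
      (∫ x in Ω, ‖gradient u x‖ ^ (p - 2) * (inner ℝ (gradient u x) (gradient φ x) : ℝ)) +
      ∫ x in Ω, ‖gradient u x‖ ^ (q - 2) * (inner ℝ (gradient u x) (gradient φ x) : ℝ)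

/-- An exterior domain: a nonempty open connected set containing `{x : |x| > R}`
for some `R > 0`. -/
def IsExteriorDomain {N : ℕ} (Ω : Set (EuclideanSpace ℝ (Fin N))) : Prop :=
  IsOpen Ω ∧ IsConnected Ω ∧ ∃ R > 0, {x : EuclideanSpace ℝ (Fin N) | R < ‖x‖} ⊆ Ω

set_option maxHeartbeats 2000000 in
/-- Liouville theorem in `ℝ^N` for `-Δ_p u - Δ_q u ≥ |∇u|^m` with
`p - 1 < m < N(q-1)/(N-1)`. -/
theorem liouville_pure_gradient
    (N : ℕ) (hN : 2 ≤ N) (p q m : ℝ) (hq1 : 1 < q) (hqN : q < (N : ℝ)) (hqp : q < p)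
    (hm1 : p - 1 < m) (hm2 : m < (N : ℝ) * (q - 1) / ((N : ℝ) - 1))
    (u : EuclideanSpace ℝ (Fin N) → ℝ) (hu : ContDiff ℝ 1 u)
    (hupos : ∀ x, 0 < u x)
    (hsuper : WeakPQSuper N p q Set.univ u (fun x => ‖gradient u x‖ ^ m)) :
    ∃ c : ℝ, ∀ x, u x = c := by
  classical
  have hp1 : 1 < p := hq1.trans hqp
  have hm0 : (0:ℝ) < m := by linarith
  have hmq1 : (0:ℝ) < m - q + 1 := by linarith
  have hmp1 : (0:ℝ) < m - p + 1 := by linarith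
  have hN2 : (2:ℝ) ≤ (N:ℝ) := by exact_mod_cast hN
  have hN1 : (0:ℝ) < (N:ℝ) - 1 := by linarith
  set θp : ℝ := m / (m - p + 1) with hθp_def
  set θq : ℝ := m / (m - q + 1) with hθq_def
  have hθqN : (N:ℝ) < θq := by
    have h1 : m * ((N:ℝ) - 1) < (N:ℝ) * (q - 1) := (lt_div_iff₀ hN1).mp hm2
    rw [hθq_def, lt_div_iff₀ hmq1]
    nlinarith
  have hθpq : θq ≤ θp := by
    rw [hθp_def, hθq_def, div_le_div_iff₀ hmq1 hmp1]
    nlinarith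
  have hθq1 : 1 < θq := by linarith
  have hθp1 : 1 < θp := by linarith
  set k : ℕ := ⌈θp⌉₊ + 2 with hk_def
  set κ : ℝ := (k : ℝ) with hκ_def
  have hκp : θp < κ := by
    have h1 := Nat.le_ceil θp
    rw [hκ_def, hk_def]
    push_cast
    linarith
  have hκq : θq < κ := lt_of_le_of_lt hθpq hκp
  have hκ1 : 1 < κ := by linarith
  have hk1 : 1 ≤ k := by
    rw [hk_def]; omega
  have hκnat : ((k - 1 : ℕ) : ℝ) = κ - 1 := by
    rw [hκ_def, Nat.cast_sub hk1, Nat.cast_one]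
  -- the gradient of u
  set G : EuclideanSpace ℝ (Fin N) → ℝ := fun x => ‖gradient u x‖ with hG_def
  have hGcont : Continuous G := (continuous_gradient_of_contDiff hu).norm
  have hGm_cont : Continuous fun x => G x ^ m :=
    (Real.continuous_rpow_const hm0.le).comp hGcont
  have hGm_nn : ∀ x, 0 ≤ G x ^ m := fun x => Real.rpow_nonneg (norm_nonneg _) m
  -- the bump function
  set b : ContDiffBump (0 : EuclideanSpace ℝ (Fin N)) := ⟨1, 2, one_pos, one_lt_two⟩
    with hb_def
  have hbc1 : ContDiff ℝ 1 ⇑b := b.contDiff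
  have hbdiff : Differentiable ℝ ⇑b := hbc1.differentiable one_ne_zero
  have hfdb_cont : Continuous (fderiv ℝ ⇑b) := hbc1.continuous_fderiv one_ne_zero
  have hfdb_cs : HasCompactSupport (fderiv ℝ ⇑b) :=
    IsCompact.of_isClosed_subset b.hasCompactSupport isClosed_closure
      (tsupport_fderiv_subset ℝ)
  obtain ⟨K, hK⟩ := hfdb_cs.exists_bound_of_continuous hfdb_cont
  have hK0 : 0 ≤ K := le_trans (norm_nonneg _) (hK 0)
  -- constants in the final estimate
  set c1 : ℝ := (volume (closedBall (0 : EuclideanSpace ℝ (Fin N)) 1)).toReal with hc1_def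
  have hc10 : 0 ≤ c1 := ENNReal.toReal_nonneg
  set Ap : ℝ := (4:ℝ) ^ (θp / (m / (p - 1))) with hAp_def
  set Aq : ℝ := (4:ℝ) ^ (θq / (m / (q - 1))) with hAq_def
  have hAp0 : 0 ≤ Ap := Real.rpow_nonneg (by norm_num) _
  have hAq0 : 0 ≤ Aq := Real.rpow_nonneg (by norm_num) _
  set Cp : ℝ := 2 * Ap * (κ * K) ^ θp * 2 ^ (N:ℕ) * c1 with hCp_def
  set Cq : ℝ := 2 * Aq * (κ * K) ^ θq * 2 ^ (N:ℕ) * c1 with hCq_def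
  -- the key quantitative estimate
  have key : ∀ R : ℝ, 0 < R →
      ∫ x in closedBall (0 : EuclideanSpace ℝ (Fin N)) R, G x ^ m ≤
        Cp * R ^ (-(θp - (N:ℝ))) + Cq * R ^ (-(θq - (N:ℝ))) := by
    intro R hR
    have hrIn : b.rIn = 1 := rfl
    have hrOut : b.rOut = 2 := rfl
    -- the rescaled cutoff
    set ℓ : EuclideanSpace ℝ (Fin N) →L[ℝ] EuclideanSpace ℝ (Fin N) :=
      R⁻¹ • ContinuousLinearMap.id ℝ (EuclideanSpace ℝ (Fin N)) with hℓ_def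
    set ψ : EuclideanSpace ℝ (Fin N) → ℝ := ⇑b ∘ ⇑ℓ with hψ_def
    have hψapp : ∀ x, ψ x = b (R⁻¹ • x) := by
      intro x
      simp [hψ_def, hℓ_def]
    have hψc : ContDiff ℝ 1 ψ := hbc1.comp ℓ.contDiff
    have hψdiff : Differentiable ℝ ψ := hψc.differentiable one_ne_zero
    have hψgrad_cont : Continuous (gradient ψ) := continuous_gradient_of_contDiff hψc
    set D : EuclideanSpace ℝ (Fin N) → ℝ := fun x => ‖gradient ψ x‖ with hD_def
    have hDcont : Continuous D := hψgrad_cont.norm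
    have hsmul_norm : ∀ x : EuclideanSpace ℝ (Fin N), ‖R⁻¹ • x‖ = R⁻¹ * ‖x‖ := by
      intro x; rw [norm_smul, norm_inv, Real.norm_eq_abs, abs_of_pos hR]
    have hDK : ∀ x, D x ≤ K / R := by
      intro x
      have h1 : fderiv ℝ ψ x = (fderiv ℝ ⇑b (ℓ x)).comp (ℓ :
          EuclideanSpace ℝ (Fin N) →L[ℝ] EuclideanSpace ℝ (Fin N)) := by
        rw [hψ_def, fderiv_comp x (hbdiff (ℓ x)) ℓ.differentiableAt,
          ContinuousLinearMap.fderiv]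
      have hℓapp : ∀ v : EuclideanSpace ℝ (Fin N), ℓ v = R⁻¹ • v := by
        intro v; simp [hℓ_def]
      have hℓnorm : ‖(ℓ : EuclideanSpace ℝ (Fin N) →L[ℝ] EuclideanSpace ℝ (Fin N))‖ ≤ R⁻¹ := by
        refine ContinuousLinearMap.opNorm_le_bound _ (by positivity) fun v => ?_
        rw [hℓapp v, hsmul_norm v]
      calc D x = ‖fderiv ℝ ψ x‖ := norm_gradient_eq ψ x
        _ = ‖(fderiv ℝ ⇑b (ℓ x)).comp (ℓ :
              EuclideanSpace ℝ (Fin N) →L[ℝ] EuclideanSpace ℝ (Fin N))‖ := by rw [h1]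
        _ ≤ ‖fderiv ℝ ⇑b (ℓ x)‖ * ‖(ℓ :
              EuclideanSpace ℝ (Fin N) →L[ℝ] EuclideanSpace ℝ (Fin N))‖ :=
            ContinuousLinearMap.opNorm_comp_le _ _
        _ ≤ K * R⁻¹ := mul_le_mul (hK _) hℓnorm (norm_nonneg _) hK0
        _ = K / R := by rw [div_eq_mul_inv]
    have hψ_nonneg : ∀ x, 0 ≤ ψ x := fun x => b.nonneg
    have hψ_le_one : ∀ x, ψ x ≤ 1 := fun x => b.le_one
    have hψ_one : ∀ x ∈ closedBall (0 : EuclideanSpace ℝ (Fin N)) R, ψ x = 1 := by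
      intro x hx
      rw [hψapp]
      apply b.one_of_mem_closedBall
      rw [mem_closedBall_zero_iff] at hx ⊢
      rw [hrIn, hsmul_norm]
      calc R⁻¹ * ‖x‖ ≤ R⁻¹ * R := mul_le_mul_of_nonneg_left hx (by positivity)
        _ = 1 := inv_mul_cancel₀ hR.ne'
    have hψ_zero : ∀ x, x ∉ closedBall (0 : EuclideanSpace ℝ (Fin N)) (2*R) → ψ x = 0 := by
      intro x hx
      rw [mem_closedBall_zero_iff, not_le] at hx
      have hns : R⁻¹ • x ∉ Function.support ⇑b := by
        rw [b.support_eq, hrOut]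
        rw [mem_ball_zero_iff, not_lt, hsmul_norm]
        rw [le_inv_mul_iff₀ hR]
        linarith
      rw [hψapp]
      exact Function.notMem_support.mp hns
    have hψsupp : Function.support ψ ⊆ closedBall (0 : EuclideanSpace ℝ (Fin N)) (2*R) := by
      intro x hx
      by_contra h
      exact hx (hψ_zero x h)
    have hψts : tsupport ψ ⊆ closedBall (0 : EuclideanSpace ℝ (Fin N)) (2*R) :=
      closure_minimal hψsupp Metric.isClosed_closedBall
    have hψcs : HasCompactSupport ψ :=
      IsCompact.of_isClosed_subset (isCompact_closedBall _ _) (isClosed_tsupport ψ) hψts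
    -- the test function
    set φ : EuclideanSpace ℝ (Fin N) → ℝ := fun x => ψ x ^ k with hφ_def
    have hφc : ContDiff ℝ 1 φ := hψc.pow k
    have hφnn : ∀ x, 0 ≤ φ x := fun x => pow_nonneg (hψ_nonneg x) k
    have hφsupp_sub : tsupport φ ⊆ tsupport ψ := by
      apply closure_mono
      intro x hx
      rw [Function.mem_support] at hx ⊢
      intro h0
      exact hx (by simp [hφ_def, h0, zero_pow (by omega : k ≠ 0)])
    have hφcs : HasCompactSupport φ :=
      IsCompact.of_isClosed_subset hψcs (isClosed_tsupport φ) hφsupp_sub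
    -- gradient of φ
    have hgradφ : ∀ x, gradient φ x = ((k:ℝ) * ψ x ^ (k-1)) • gradient ψ x := by
      intro x
      apply gradient_eq_smul_gradient
      have h2 := (hasDerivAt_pow k (ψ x)).comp_hasFDerivAt x (hψdiff x).hasFDerivAt
      have h3 : HasFDerivAt φ (((k:ℝ) * ψ x ^ (k-1)) • fderiv ℝ ψ x) x := by
        rw [← (hψdiff x).hasFDerivAt.fderiv] at h2 ⊢
        exact h2
      rw [h3.fderiv, (hψdiff x).hasFDerivAt.fderiv]
    have hgradφ_cont : Continuous (gradient φ) := by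
      have hfe : gradient φ = fun x => ((k:ℝ) * ψ x ^ (k-1)) • gradient ψ x := funext hgradφ
      rw [hfe]
      exact (continuous_const.mul (hψc.continuous.pow _)).smul hψgrad_cont
    -- inner product bound
    have hψpow_eq : ∀ x, (ψ x : ℝ) ^ (κ - 1) = ψ x ^ (k - 1 : ℕ) := by
      intro x
      rw [← hκnat, Real.rpow_natCast]
    have hinner_bound : ∀ x, (inner ℝ (gradient u x) (gradient φ x) : ℝ) ≤
        G x * (κ * ψ x ^ (κ - 1) * D x) := by
      intro x
      rw [hgradφ x, real_inner_smul_right]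
      have h1 : (inner ℝ (gradient u x) (gradient ψ x) : ℝ) ≤ G x * D x :=
        real_inner_le_norm _ _
      have hc : (0:ℝ) ≤ (k:ℝ) * ψ x ^ (k-1) :=
        mul_nonneg (Nat.cast_nonneg k) (pow_nonneg (hψ_nonneg x) _)
      calc (k:ℝ) * ψ x ^ (k-1) * (inner ℝ (gradient u x) (gradient ψ x) : ℝ)
          ≤ (k:ℝ) * ψ x ^ (k-1) * (G x * D x) := mul_le_mul_of_nonneg_left h1 hc
        _ = G x * (κ * ψ x ^ (κ - 1) * D x) := by rw [hψpow_eq x, hκ_def]; ring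
    -- the integrand f1
    set f1 : EuclideanSpace ℝ (Fin N) → ℝ := fun x => G x ^ m * φ x with hf1_def
    have hf1cont : Continuous f1 := hGm_cont.mul hφc.continuous
    have hf1cs : HasCompactSupport f1 := hφcs.mul_left
    have hf1int : Integrable f1 := hf1cont.integrable_of_hasCompactSupport hf1cs
    have hf1nn : ∀ x, 0 ≤ f1 x := fun x => mul_nonneg (hGm_nn x) (hφnn x)
    set VolR : ℝ := (volume (closedBall (0 : EuclideanSpace ℝ (Fin N)) (2*R))).toReal
      with hVolR_def
    -- the per-exponent estimate
    have est : ∀ r : ℝ, 1 < r → r - 1 < m → m / (m - r + 1) < κ →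
        (∫ x, G x ^ (r-2) * (inner ℝ (gradient u x) (gradient φ x) : ℝ)) ≤
          (1/4) * (∫ x, f1 x) +
            (4:ℝ) ^ ((m / (m - r + 1)) / (m / (r - 1))) *
              ((κ * (K / R)) ^ (m / (m - r + 1)) * VolR) := by
      intro r hr hrm hκr
      have hmr1 : (0:ℝ) < m - r + 1 := by linarith
      have hr1 : (0:ℝ) < r - 1 := by linarith
      set θ : ℝ := m / (m - r + 1) with hθ_def
      set A : ℝ := (4:ℝ) ^ (θ / (m / (r - 1))) with hA_def
      have hA0 : 0 ≤ A := Real.rpow_nonneg (by norm_num) _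
      have hθ0 : 0 < θ := div_pos hm0 hmr1
      have hκ0 : (0:ℝ) ≤ κ := Nat.cast_nonneg k
      -- measurability of the integrand
      have hinner_cont : Continuous fun x =>
          (inner ℝ (gradient u x) (gradient φ x) : ℝ) :=
        (continuous_gradient_of_contDiff hu).inner hgradφ_cont
      have hf2meas : AEStronglyMeasurable
          (fun x => G x ^ (r-2) * (inner ℝ (gradient u x) (gradient φ x) : ℝ)) volume := by
        have h1 : Measurable fun y : ℝ => y ^ (r-2) := by measurability
        exact ((h1.comp hGcont.measurable).mul hinner_cont.measurable).aestronglyMeasurable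
      -- dominating function
      set g2 : EuclideanSpace ℝ (Fin N) → ℝ := fun x => G x ^ (r-1) * ‖gradient φ x‖
        with hg2_def
      have hg2cont : Continuous g2 :=
        ((Real.continuous_rpow_const hr1.le).comp hGcont).mul hgradφ_cont.norm
      have hg2cs : HasCompactSupport g2 := by
        refine IsCompact.of_isClosed_subset hφcs (isClosed_tsupport g2)
          (closure_minimal ?_ (isClosed_tsupport φ))
        intro x hx
        by_contra h
        apply hx
        have h0 : gradient φ x = 0 := gradient_eq_zero_of_nmem_tsupport h
        simp [hg2_def, h0]
      have hf2bound : ∀ x, ‖G x ^ (r-2) * (inner ℝ (gradient u x) (gradient φ x) : ℝ)‖ ≤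
          g2 x := by
        intro x
        rw [Real.norm_eq_abs, abs_mul, abs_of_nonneg (Real.rpow_nonneg (norm_nonneg _) _)]
        calc G x ^ (r-2) * |(inner ℝ (gradient u x) (gradient φ x) : ℝ)|
            ≤ G x ^ (r-2) * (G x * ‖gradient φ x‖) := by
              refine mul_le_mul_of_nonneg_left ?_ (Real.rpow_nonneg (norm_nonneg _) _)
              exact abs_real_inner_le_norm _ _
          _ = (G x ^ (r-2) * G x) * ‖gradient φ x‖ := by ring
          _ = g2 x := by rw [rpow_sub_two_mul hr (norm_nonneg _)]
      have hf2int : Integrable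
          (fun x => G x ^ (r-2) * (inner ℝ (gradient u x) (gradient φ x) : ℝ)) :=
        Integrable.mono' (hg2cont.integrable_of_hasCompactSupport hg2cs) hf2meas
          (ae_of_all _ hf2bound)
      -- the comparison function
      set h2 : EuclideanSpace ℝ (Fin N) → ℝ := fun x => A * (κ * D x) ^ θ with hh2_def
      have hh2cont : Continuous h2 := continuous_const.mul
        ((Real.continuous_rpow_const hθ0.le).comp (continuous_const.mul hDcont))
      have hDzero : ∀ x, x ∉ tsupport ψ → D x = 0 := by
        intro x hx
        have h0 : gradient ψ x = 0 := gradient_eq_zero_of_nmem_tsupport hx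
        simp [hD_def, h0]
      have hh2cs : HasCompactSupport h2 := by
        refine IsCompact.of_isClosed_subset hψcs (isClosed_tsupport h2)
          (closure_minimal ?_ (isClosed_tsupport ψ))
        intro x hx
        by_contra h
        apply hx
        simp [hh2_def, hDzero x h, Real.zero_rpow hθ0.ne']
      have hh2int : Integrable h2 := hh2cont.integrable_of_hasCompactSupport hh2cs
      have hg3int : Integrable (fun x => (1/4) * f1 x + h2 x) :=
        (hf1int.const_mul _).add hh2int
      -- pointwise estimate
      have hpt : ∀ x, G x ^ (r-2) * (inner ℝ (gradient u x) (gradient φ x) : ℝ) ≤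
          (1/4) * f1 x + h2 x := by
        intro x
        have hb2 := pointwise_bound m r hr hrm κ hκr (G x) (ψ x) (D x)
          ((inner ℝ (gradient u x) (gradient φ x) : ℝ)) (norm_nonneg _) (hψ_nonneg x)
          (hψ_le_one x) (norm_nonneg _) (hinner_bound x)
        have hφκ : φ x = ψ x ^ κ := by rw [hφ_def, hκ_def, Real.rpow_natCast]
        have heq : (1/4) * f1 x + h2 x =
            (1/4) * (G x ^ m * ψ x ^ κ) + A * (κ * D x) ^ θ := by
          simp only [hf1_def, hh2_def, hφκ]
        rw [heq]
        exact hb2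
      -- integrate
      have hint1 : (∫ x, G x ^ (r-2) * (inner ℝ (gradient u x) (gradient φ x) : ℝ)) ≤
          ∫ x, ((1/4) * f1 x + h2 x) := integral_mono hf2int hg3int hpt
      have hint2 : (∫ x, ((1/4) * f1 x + h2 x)) = (1/4) * (∫ x, f1 x) + ∫ x, h2 x := by
        rw [integral_add (hf1int.const_mul _) hh2int, integral_const_mul]
      -- bound the ∫ h2 term
      have hzero : ∀ x, x ∉ closedBall (0 : EuclideanSpace ℝ (Fin N)) (2*R) →
          (κ * D x) ^ θ = 0 := by
        intro x hx
        have hxts : x ∉ tsupport ψ := fun h => hx (hψts h)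
        rw [hDzero x hxts, mul_zero, Real.zero_rpow hθ0.ne']
      have hsetint : (∫ x, (κ * D x) ^ θ) =
          ∫ x in closedBall (0 : EuclideanSpace ℝ (Fin N)) (2*R), (κ * D x) ^ θ :=
        (setIntegral_eq_integral_of_forall_compl_eq_zero hzero).symm
      have hbd : (∫ x in closedBall (0 : EuclideanSpace ℝ (Fin N)) (2*R), (κ * D x) ^ θ) ≤
          (κ * (K / R)) ^ θ * VolR := by
        have hnorm := norm_setIntegral_le_of_norm_le_const (μ := volume)
          (s := closedBall (0 : EuclideanSpace ℝ (Fin N)) (2*R))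
          (C := (κ * (K / R)) ^ θ) measure_closedBall_lt_top
          (f := fun x => (κ * D x) ^ θ) ?_
        · exact le_trans (le_abs_self _) (by rw [← Real.norm_eq_abs]; exact hnorm)
        · intro x _
          rw [Real.norm_eq_abs,
            abs_of_nonneg (Real.rpow_nonneg (mul_nonneg hκ0 (norm_nonneg _)) _)]
          exact Real.rpow_le_rpow (mul_nonneg hκ0 (norm_nonneg _))
            (mul_le_mul_of_nonneg_left (hDK x) hκ0) hθ0.le
      have hinth2 : (∫ x, h2 x) ≤ A * ((κ * (K / R)) ^ θ * VolR) := by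
        have hintA : (∫ x, h2 x) = A * ∫ x, (κ * D x) ^ θ := by
          simp only [hh2_def]
          rw [integral_const_mul]
        rw [hintA]
        apply mul_le_mul_of_nonneg_left _ hA0
        rw [hsetint]
        exact hbd
      calc (∫ x, G x ^ (r-2) * (inner ℝ (gradient u x) (gradient φ x) : ℝ))
          ≤ (1/4) * (∫ x, f1 x) + ∫ x, h2 x := hint1.trans_eq hint2
        _ ≤ (1/4) * (∫ x, f1 x) + A * ((κ * (K / R)) ^ θ * VolR) :=
            add_le_add_right hinth2 _
    -- apply the weak super-solution inequality
    have hsup := hsuper φ hφc hφcs (Set.subset_univ _) hφnn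
    rw [setIntegral_univ, setIntegral_univ, setIntegral_univ] at hsup
    have hsup' : (∫ x, f1 x) ≤
        (∫ x, G x ^ (p-2) * (inner ℝ (gradient u x) (gradient φ x) : ℝ)) +
        ∫ x, G x ^ (q-2) * (inner ℝ (gradient u x) (gradient φ x) : ℝ) := hsup
    have hestp := est p hp1 hm1 hκp
    have hestq := est q hq1 (by linarith) hκq
    rw [← hθp_def, ← hAp_def] at hestp
    rw [← hθq_def, ← hAq_def] at hestq
    have hint_ball : (∫ x in closedBall (0 : EuclideanSpace ℝ (Fin N)) R, G x ^ m) ≤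
        ∫ x, f1 x := by
      have h1 : (∫ x in closedBall (0 : EuclideanSpace ℝ (Fin N)) R, G x ^ m) =
          ∫ x in closedBall (0 : EuclideanSpace ℝ (Fin N)) R, f1 x := by
        apply setIntegral_congr_fun measurableSet_closedBall
        intro x hx
        simp [hf1_def, hφ_def, hψ_one x hx]
      rw [h1]
      exact setIntegral_le_integral hf1int (ae_of_all _ hf1nn)
    have hI : (∫ x, f1 x) ≤
        2 * (Ap * ((κ * (K / R)) ^ θp * VolR) + Aq * ((κ * (K / R)) ^ θq * VolR)) := by
      linarith
    have hvol : VolR = (2*R) ^ (N:ℕ) * c1 := by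
      rw [hVolR_def, Measure.addHaar_closedBall' volume _ (by positivity : (0:ℝ) ≤ 2*R)]
      rw [ENNReal.toReal_mul, ENNReal.toReal_ofReal (by positivity),
        finrank_euclideanSpace_fin]
    have hc_split : ∀ θ' : ℝ, (κ * (K / R)) ^ θ' * VolR =
        (κ * K) ^ θ' * 2 ^ (N:ℕ) * c1 * R ^ (-(θ' - (N:ℝ))) := by
      intro θ'
      rw [hvol]
      have h1 : κ * (K / R) = (κ * K) / R := by ring
      rw [h1, Real.div_rpow (by positivity) hR.le, mul_pow]
      have h2 : (R:ℝ) ^ (N:ℕ) = R ^ ((N:ℕ):ℝ) := (Real.rpow_natCast R N).symm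
      rw [h2]
      have h3 : R ^ ((N:ℕ):ℝ) / R ^ θ' = R ^ (-(θ' - ((N:ℕ):ℝ))) := by
        rw [← Real.rpow_sub hR]; ring_nf
      calc (κ*K)^θ' / R^θ' * ((2:ℝ)^(N:ℕ) * R ^ ((N:ℕ):ℝ) * c1)
          = (κ*K)^θ' * 2^(N:ℕ) * c1 * (R ^ ((N:ℕ):ℝ) / R^θ') := by ring
        _ = _ := by rw [h3]
    calc (∫ x in closedBall (0 : EuclideanSpace ℝ (Fin N)) R, G x ^ m)
        ≤ ∫ x, f1 x := hint_ball
      _ ≤ 2 * (Ap * ((κ * (K / R)) ^ θp * VolR) + Aq * ((κ * (K / R)) ^ θq * VolR)) := hI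
      _ = Cp * R ^ (-(θp - (N:ℝ))) + Cq * R ^ (-(θq - (N:ℝ))) := by
          rw [hc_split θp, hc_split θq, hCp_def, hCq_def]; ring
  -- integrability of G^m on closed balls
  have hGm_intOn : ∀ ρ : ℝ, IntegrableOn (fun x => G x ^ m)
      (closedBall (0 : EuclideanSpace ℝ (Fin N)) ρ) volume :=
    fun ρ => hGm_cont.continuousOn.integrableOn_compact (isCompact_closedBall _ _)
  -- the integral of G^m over every ball vanishes
  have hJ : ∀ ρ : ℝ, 0 < ρ →
      ∫ x in closedBall (0 : EuclideanSpace ℝ (Fin N)) ρ, G x ^ m = 0 := by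
    intro ρ hρ
    refine le_antisymm ?_ (setIntegral_nonneg measurableSet_closedBall fun x _ => hGm_nn x)
    have hmono : ∀ R : ℝ, ρ ≤ R →
        (∫ x in closedBall (0 : EuclideanSpace ℝ (Fin N)) ρ, G x ^ m) ≤
          ∫ x in closedBall (0 : EuclideanSpace ℝ (Fin N)) R, G x ^ m := by
      intro R hR
      refine setIntegral_mono_set (hGm_intOn R) (ae_of_all _ fun x => hGm_nn x) ?_
      exact HasSubset.Subset.eventuallyLE (closedBall_subset_closedBall hR)
    have htends : Tendsto (fun R : ℝ => Cp * R ^ (-(θp - (N:ℝ))) + Cq * R ^ (-(θq - (N:ℝ))))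
        atTop (nhds 0) := by
      have h1 : Tendsto (fun R : ℝ => Cp * R ^ (-(θp - (N:ℝ)))) atTop (nhds (Cp * 0)) :=
        (tendsto_rpow_neg_atTop (by linarith)).const_mul Cp
      have h2 : Tendsto (fun R : ℝ => Cq * R ^ (-(θq - (N:ℝ)))) atTop (nhds (Cq * 0)) :=
        (tendsto_rpow_neg_atTop (by linarith)).const_mul Cq
      have := h1.add h2
      simpa using this
    refine ge_of_tendsto htends ?_
    filter_upwards [eventually_ge_atTop (max ρ 1)] with R hR
    have hRρ : ρ ≤ R := le_trans (le_max_left _ _) hR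
    have hR0 : 0 < R := lt_of_lt_of_le one_pos (le_trans (le_max_right _ _) hR)
    exact le_trans (hmono R hRρ) (key R hR0)
  -- the gradient vanishes identically
  have hgrad0 : ∀ x, gradient u x = 0 := by
    intro x₀
    by_contra hne
    have hGpos : 0 < G x₀ := norm_pos_iff.mpr hne
    -- find a small ball where G^m is bounded below
    have hcont : ContinuousAt G x₀ := hGcont.continuousAt
    obtain ⟨δ, hδpos, hδ⟩ : ∃ δ > 0, ∀ y ∈ closedBall x₀ δ, (G x₀ / 2) ^ m ≤ G y ^ m := by
      have h1 : ∀ᶠ y in nhds x₀, G x₀ / 2 < G y :=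
        hcont.eventually_const_lt (by linarith)
      obtain ⟨ε, hεpos, hε⟩ := Metric.eventually_nhds_iff_ball.mp h1
      refine ⟨ε / 2, by linarith, fun y hy => ?_⟩
      have : y ∈ ball x₀ ε := lt_of_le_of_lt (mem_closedBall.mp hy) (by linarith)
      exact Real.rpow_le_rpow (by positivity) (hε y this).le hm0.le
    set ρ : ℝ := ‖x₀‖ + δ with hρ_def
    have hρpos : 0 < ρ := by positivity
    have hsub : closedBall x₀ δ ⊆ closedBall (0 : EuclideanSpace ℝ (Fin N)) ρ := by
      intro y hy
      rw [mem_closedBall_zero_iff]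
      rw [mem_closedBall, dist_eq_norm] at hy
      calc ‖y‖ = ‖y - x₀ + x₀‖ := by rw [sub_add_cancel]
        _ ≤ ‖y - x₀‖ + ‖x₀‖ := norm_add_le _ _
        _ ≤ δ + ‖x₀‖ := by linarith
        _ = ρ := by rw [hρ_def]; ring
    have h1 : (G x₀ / 2) ^ m * (volume (closedBall x₀ δ)).toReal ≤
        ∫ x in closedBall x₀ δ, G x ^ m :=
      by have := setIntegral_ge_of_const_le measurableSet_closedBall
          measure_closedBall_lt_top.ne hδ ((hGm_intOn ρ).mono_set hsub)
         rw [smul_eq_mul, mul_comm] at this; exact this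
    have h2 : (∫ x in closedBall x₀ δ, G x ^ m) ≤
        ∫ x in closedBall (0 : EuclideanSpace ℝ (Fin N)) ρ, G x ^ m :=
      setIntegral_mono_set (hGm_intOn ρ) (ae_of_all _ fun x => hGm_nn x)
        (HasSubset.Subset.eventuallyLE hsub)
    have h3 : 0 < (G x₀ / 2) ^ m * (volume (closedBall x₀ δ)).toReal := by
      apply mul_pos (Real.rpow_pos_of_pos (by positivity) m)
      exact ENNReal.toReal_pos (measure_closedBall_pos volume x₀ hδpos).ne'
        measure_closedBall_lt_top.ne
    have h4 := hJ ρ hρpos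
    linarith
  -- conclude that u is constant
  have hfd0 : ∀ x, fderiv ℝ u x = 0 := by
    intro x
    have h1 : (InnerProductSpace.toDual ℝ (EuclideanSpace ℝ (Fin N))).symm (fderiv ℝ u x) = 0 :=
      hgrad0 x
    rwa [LinearIsometryEquiv.map_eq_zero_iff] at h1
  exact ⟨u 0, fun x => is_const_of_fderiv_eq_zero (hu.differentiable one_ne_zero) hfd0 x 0⟩
end
end

section
/- Let N ≥ 1 be an integer, let p, q be real exponents with 1 < q < p, let Ω ⊆ ℝ^N be a domain, and let f be locally in L^{pN/(pN+p-N)} on Ω. Suppose u, v ∈ C¹(Ω) satisfy -Δ_p u - Δ_q u ≥ f weakly in Ω and -Δ_p v - Δ_q v ≤ f weakly in Ω (the latter meaning the reversed integral inequality for all nonnegative test functions). Suppose moreover that for every ε > 0 the set {x ∈ Ω : u(x) - v(x) + ε ≤ 0} is compact and contained in Ω. Then u ≥ v everywhere in Ω. -/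
open MeasureTheory Filter Metric

noncomputable section

/-- `u` satisfies `-Δ_p u - Δ_q u ≤ f` weakly in `Ω`. -/
def WeakPQSub (N : ℕ) (p q : ℝ) (Ω : Set (EuclideanSpace ℝ (Fin N)))
    (u f : EuclideanSpace ℝ (Fin N) → ℝ) : Prop :=
  ∀ φ : EuclideanSpace ℝ (Fin N) → ℝ,
    ContDiff ℝ 1 φ → HasCompactSupport φ → tsupport φ ⊆ Ω → (∀ x, 0 ≤ φ x) →
    (∫ x in Ω, ‖gradient u x‖ ^ (p - 2) * (inner ℝ (gradient u x) (gradient φ x) : ℝ)) +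
      (∫ x in Ω, ‖gradient u x‖ ^ (q - 2) * (inner ℝ (gradient u x) (gradient φ x) : ℝ)) ≤
    ∫ x in Ω, f x * φ x

section Aux

open Set Topology

variable {F : Type*} [NormedAddCommGroup F] [InnerProductSpace ℝ F]

local notation "⟪" x ", " y "⟫" => @inner ℝ _ _ x y

lemma rpow_mul_self' (e : ℝ) (he : -1 < e) {r : ℝ} (hr : 0 ≤ r) :
    r ^ e * r = r ^ (e + 1) := by
  rcases eq_or_lt_of_le hr with h | h
  · rw [← h, mul_zero, Real.zero_rpow (ne_of_gt (show (0:ℝ) < e + 1 by linarith))]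
  · rw [Real.rpow_add_one (ne_of_gt h)]

lemma S_pos (e : ℝ) (he : -1 < e) {a b : F} (hab : a ≠ b) :
    0 < ‖a‖ ^ e * ⟪a, a - b⟫ + ‖b‖ ^ e * ⟪b, b - a⟫ := by
  by_cases ha : a = 0
  · subst ha
    have hb : b ≠ 0 := fun h => hab (h ▸ rfl)
    have hbn : 0 < ‖b‖ := norm_pos_iff.2 hb
    have : ⟪(0 : F), (0 : F) - b⟫ = 0 := inner_zero_left _
    rw [this, mul_zero, zero_add, sub_zero, real_inner_self_eq_norm_sq]
    positivity
  · by_cases hb : b = 0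
    · subst hb
      have han : 0 < ‖a‖ := norm_pos_iff.2 ha
      have : ⟪(0 : F), (0 : F) - a⟫ = 0 := inner_zero_left _
      rw [this, mul_zero, add_zero, sub_zero, real_inner_self_eq_norm_sq]
      positivity
    · have han : 0 < ‖a‖ := norm_pos_iff.2 ha
      have hbn : 0 < ‖b‖ := norm_pos_iff.2 hb
      have hae : 0 < ‖a‖ ^ e := Real.rpow_pos_of_pos han e
      have hbe : 0 < ‖b‖ ^ e := Real.rpow_pos_of_pos hbn e
      have hc : ⟪a, b⟫ ≤ ‖a‖ * ‖b‖ := real_inner_le_norm a b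
      have hexp : ⟪a, a - b⟫ = ‖a‖ ^ 2 - ⟪a, b⟫ := by
        rw [inner_sub_right, real_inner_self_eq_norm_sq]
      have hexp' : ⟪b, b - a⟫ = ‖b‖ ^ 2 - ⟪a, b⟫ := by
        rw [inner_sub_right, real_inner_self_eq_norm_sq, real_inner_comm]
      rw [hexp, hexp']
      rcases eq_or_ne ‖a‖ ‖b‖ with hst | hst
      · -- equal norms: Cauchy-Schwarz is strict
        have hclt : ⟪a, b⟫ < ‖a‖ * ‖b‖ := by
          rcases lt_or_eq_of_le hc with h | h
          · exact h
          · exfalso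
            have := inner_eq_norm_mul_iff_real.1 h
            rw [← hst] at this
            exact hab (smul_right_injective F (ne_of_gt han) this)
        have h2 : ⟪a, b⟫ < ‖a‖ ^ 2 := by
          calc ⟪a, b⟫ < ‖a‖ * ‖b‖ := hclt
            _ = ‖a‖ ^ 2 := by rw [← hst]; ring
        rw [← hst]
        have h3 := mul_pos hae (sub_pos.2 h2)
        linarith
      · -- distinct norms
        have hmono : 0 < (‖a‖ ^ (e + 1) - ‖b‖ ^ (e + 1)) * (‖a‖ - ‖b‖) := by
          rcases lt_or_gt_of_ne hst with h | h
          · have := Real.rpow_lt_rpow (le_of_lt han) h (by linarith : (0:ℝ) < e + 1)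
            nlinarith
          · have := Real.rpow_lt_rpow (le_of_lt hbn) h (by linarith : (0:ℝ) < e + 1)
            nlinarith
        rw [← rpow_mul_self' e he (le_of_lt han), ← rpow_mul_self' e he (le_of_lt hbn)] at hmono
        nlinarith

lemma S_nonneg (e : ℝ) (he : -1 < e) (a b : F) :
    0 ≤ ‖a‖ ^ e * ⟪a, a - b⟫ + ‖b‖ ^ e * ⟪b, b - a⟫ := by
  rcases eq_or_ne a b with h | h
  · subst h; simp
  · exact le_of_lt (S_pos e he h)

lemma contOn_integrand {α : Type*} [TopologicalSpace α] (e : ℝ) (he : -1 < e)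
    {g h : α → F} {s : Set α} (hg : ContinuousOn g s) (hh : ContinuousOn h s) :
    ContinuousOn (fun x => ‖g x‖ ^ e * ⟪g x, h x⟫) s := by
  intro x hx
  by_cases hgx : g x = 0
  · have hb : ContinuousWithinAt (fun y => ‖g y‖ ^ (e + 1) * ‖h y‖) s x :=
      (((hg x hx).norm).rpow_const (Or.inr (by linarith))).mul ((hh x hx).norm)
    have h0 : ‖g x‖ ^ e * ⟪g x, h x⟫ = 0 := by rw [hgx, inner_zero_left, mul_zero]
    have hb0 : ‖g x‖ ^ (e + 1) * ‖h x‖ = 0 := by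
      rw [hgx, norm_zero, Real.zero_rpow (ne_of_gt (show (0:ℝ) < e + 1 by linarith)), zero_mul]
    have hb' : Tendsto (fun y => ‖g y‖ ^ (e + 1) * ‖h y‖) (𝓝[s] x)
        (𝓝 (‖g x‖ ^ (e + 1) * ‖h x‖)) := hb
    rw [hb0] at hb'
    show Tendsto (fun y => ‖g y‖ ^ e * ⟪g y, h y⟫) (𝓝[s] x) (𝓝 (‖g x‖ ^ e * ⟪g x, h x⟫))
    rw [h0]
    apply squeeze_zero_norm _ hb'
    intro y
    have h1 : ‖‖g y‖ ^ e * ⟪g y, h y⟫‖ ≤ ‖g y‖ ^ e * (‖g y‖ * ‖h y‖) := by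
      rw [norm_mul, Real.norm_rpow_of_nonneg (norm_nonneg _), norm_norm]
      exact mul_le_mul_of_nonneg_left (by
        rw [Real.norm_eq_abs]; exact abs_real_inner_le_norm _ _)
        (Real.rpow_nonneg (norm_nonneg _) e)
    calc ‖‖g y‖ ^ e * ⟪g y, h y⟫‖ ≤ ‖g y‖ ^ e * (‖g y‖ * ‖h y‖) := h1
      _ = ‖g y‖ ^ (e + 1) * ‖h y‖ := by
          rw [← mul_assoc, rpow_mul_self' e he (norm_nonneg _)]
  · exact (((hg x hx).norm).rpow_const (Or.inl (norm_ne_zero_iff.2 hgx))).mul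
      ((hg x hx).inner (hh x hx))

lemma maxsq_hasDerivAt (t : ℝ) :
    HasDerivAt (fun s : ℝ => max s 0 ^ 2) (2 * max t 0) t := by
  rcases lt_trichotomy t 0 with ht | ht | ht
  · have hev : (fun s : ℝ => max s 0 ^ 2) =ᶠ[𝓝 t] fun _ => (0:ℝ) := by
      filter_upwards [Iio_mem_nhds ht] with s hs
      rw [max_eq_right (le_of_lt hs)]
      norm_num
    rw [max_eq_right (le_of_lt ht), mul_zero]
    exact (hasDerivAt_const t (0:ℝ)).congr_of_eventuallyEq hev
  · subst ht
    have hb : ∀ s : ℝ, ‖slope (fun s : ℝ => max s 0 ^ 2) 0 s‖ ≤ |s| := by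
      intro s
      rcases eq_or_ne s 0 with rfl | hs
      · simp [slope]
      · have hval : slope (fun s : ℝ => max s 0 ^ 2) 0 s = max s 0 ^ 2 / s := by
          rw [slope_def_field]; simp
        rw [hval, Real.norm_eq_abs, abs_div,
          abs_of_nonneg (by positivity : (0:ℝ) ≤ max s 0 ^ 2), div_le_iff₀ (abs_pos.2 hs)]
        calc max s 0 ^ 2 ≤ |s| ^ 2 :=
              pow_le_pow_left₀ (le_max_right s 0) (max_le (le_abs_self s) (abs_nonneg s)) 2
          _ = |s| * |s| := sq (|s|) ▸ (sq (|s|)).symm ▸ by ring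
    have htends : Tendsto (fun s : ℝ => |s|) (𝓝[≠] (0:ℝ)) (𝓝 0) :=
      (continuous_abs.tendsto' 0 0 abs_zero).mono_left nhdsWithin_le_nhds
    have := squeeze_zero_norm hb htends
    have h0 : HasDerivAt (fun s : ℝ => max s 0 ^ 2) 0 0 :=
      hasDerivAt_iff_tendsto_slope.2 this
    simpa using h0
  · have hev : (fun s : ℝ => max s 0 ^ 2) =ᶠ[𝓝 t] fun s => s ^ 2 := by
      filter_upwards [Ioi_mem_nhds ht] with s hs
      rw [max_eq_left (le_of_lt hs)]
    rw [max_eq_left (le_of_lt ht)]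
    have h2 : HasDerivAt (fun s : ℝ => s ^ 2) (2 * t) t := by
      simpa [mul_comm] using hasDerivAt_pow 2 t
    exact h2.congr_of_eventuallyEq hev

lemma maxsq_contDiff : ContDiff ℝ 1 (fun s : ℝ => max s 0 ^ 2) := by
  rw [contDiff_one_iff_deriv]
  constructor
  · exact fun t => (maxsq_hasDerivAt t).differentiableAt
  · have hd : deriv (fun s : ℝ => max s 0 ^ 2) = fun t => 2 * max t 0 :=
      funext fun t => (maxsq_hasDerivAt t).deriv
    rw [hd]
    exact continuous_const.mul (continuous_id.max continuous_const)

end Aux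

set_option maxHeartbeats 2000000 in
/-- Comparison principle for the `(p,q)`-Laplacian. -/
theorem comparison_principle_pq
    (N : ℕ) (hN : 1 ≤ N) (p q : ℝ) (hq1 : 1 < q) (hqp : q < p)
    (Ω : Set (EuclideanSpace ℝ (Fin N))) (hΩo : IsOpen Ω) (hΩc : IsConnected Ω)
    (f : EuclideanSpace ℝ (Fin N) → ℝ)
    (hf : ∀ K ⊆ Ω, IsCompact K →
      MemLp f (ENNReal.ofReal (p * N / (p * N + p - N))) (volume.restrict K))
    (u v : EuclideanSpace ℝ (Fin N) → ℝ)
    (hu : ContDiffOn ℝ 1 u Ω) (hv : ContDiffOn ℝ 1 v Ω)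
    (hsuper : WeakPQSuper N p q Ω u f)
    (hsub : WeakPQSub N p q Ω v f)
    (hbdry : ∀ ε > (0 : ℝ), IsCompact {x ∈ Ω | u x - v x + ε ≤ 0}) :
    ∀ x ∈ Ω, v x ≤ u x := by
  intro x0 hx0
  by_contra hlt
  push_neg at hlt
  have hp1 : (1:ℝ) < p := lt_trans hq1 hqp
  have hep : (-1:ℝ) < p - 2 := by linarith
  have heq : (-1:ℝ) < q - 2 := by linarith
  set ε : ℝ := (v x0 - u x0) / 2 with hεdef
  have hε0 : 0 < ε := by rw [hεdef]; linarith
  set K : Set (EuclideanSpace ℝ (Fin N)) := {x ∈ Ω | u x - v x + ε ≤ 0} with hKdef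
  have hKc : IsCompact K := hbdry ε hε0
  have hKΩ : K ⊆ Ω := fun x hx => hx.1
  set g : EuclideanSpace ℝ (Fin N) → ℝ := fun y => v y - u y - ε with hgdef
  set w : EuclideanSpace ℝ (Fin N) → ℝ := Ω.indicator (fun y => max (g y) 0 ^ 2) with hwdef
  -- differentiability of u and v on Ω
  have hdu : ∀ x ∈ Ω, DifferentiableAt ℝ u x := fun x hx =>
    (hu.contDiffAt (hΩo.mem_nhds hx)).differentiableAt one_ne_zero
  have hdv : ∀ x ∈ Ω, DifferentiableAt ℝ v x := fun x hx =>
    (hv.contDiffAt (hΩo.mem_nhds hx)).differentiableAt one_ne_zero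
  -- derivative of g
  have hdg : ∀ x ∈ Ω, HasFDerivAt g
      ((InnerProductSpace.toDual ℝ (EuclideanSpace ℝ (Fin N)))
        (gradient v x - gradient u x)) x := by
    intro x hx
    have hgv := (hdv x hx).hasGradientAt.hasFDerivAt
    have hgu := (hdu x hx).hasGradientAt.hasFDerivAt
    have h1 := (hgv.sub hgu).sub_const ε
    rwa [← map_sub] at h1
  -- gradient of w on Ω
  have hwg : ∀ x ∈ Ω, HasGradientAt w
      ((2 * max (g x) 0) • (gradient v x - gradient u x)) x := by
    intro x hx
    have hcomp := (maxsq_hasDerivAt (g x)).comp_hasFDerivAt x (hdg x hx)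
    have heq2 : w =ᶠ[nhds x] (fun s : ℝ => max s 0 ^ 2) ∘ g := by
      filter_upwards [hΩo.mem_nhds hx] with y hy
      simp only [hwdef, Set.indicator_of_mem hy, Function.comp]
    have h2 := hcomp.congr_of_eventuallyEq heq2
    have h3 := h2.hasGradientAt
    simpa [gradient] using h3
  have hgradw : ∀ x ∈ Ω, gradient w x = (2 * max (g x) 0) • (gradient v x - gradient u x) :=
    fun x hx => (hwg x hx).gradient
  -- support of w
  have hsuppw : Function.support w ⊆ K := by
    intro x hxs
    rw [Function.mem_support] at hxs
    by_cases hxΩ : x ∈ Ω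
    · refine ⟨hxΩ, ?_⟩
      by_contra hcon
      push_neg at hcon
      have hg0 : g x ≤ 0 := by rw [hgdef]; simp only; linarith
      have : w x = 0 := by
        rw [hwdef, Set.indicator_of_mem hxΩ, max_eq_right hg0]
        norm_num
      exact hxs this
    · exact absurd (Set.indicator_of_notMem hxΩ _) hxs
  have htsupp : tsupport w ⊆ K := closure_minimal hsuppw hKc.isClosed
  have hwcs : HasCompactSupport w := hKc.of_isClosed_subset isClosed_closure htsupp
  have htsuppΩ : tsupport w ⊆ Ω := htsupp.trans hKΩ
  have hwnn : ∀ x, 0 ≤ w x := fun x => Set.indicator_nonneg (fun y _ => by positivity) x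
  -- w is C¹
  have hwC : ContDiff ℝ 1 w := by
    rw [contDiff_iff_contDiffAt]
    intro x
    by_cases hxΩ : x ∈ Ω
    · have hgx : ContDiffAt ℝ 1 g x := by
        have h1 : ContDiffAt ℝ 1 v x := hv.contDiffAt (hΩo.mem_nhds hxΩ)
        have h2 : ContDiffAt ℝ 1 u x := hu.contDiffAt (hΩo.mem_nhds hxΩ)
        exact (h1.sub h2).sub contDiffAt_const
      have hcomp := (maxsq_contDiff.contDiffAt).comp x hgx
      apply hcomp.congr_of_eventuallyEq
      filter_upwards [hΩo.mem_nhds hxΩ] with y hy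
      simp only [hwdef, Set.indicator_of_mem hy, Function.comp]
    · have hxK : x ∉ K := fun h => hxΩ (hKΩ h)
      apply (contDiffAt_const (c := (0:ℝ))).congr_of_eventuallyEq
      filter_upwards [hKc.isClosed.isOpen_compl.mem_nhds hxK] with y hy
      have hy' : y ∉ Function.support w := fun hc => hy (hsuppw hc)
      simpa [Function.mem_support, not_not] using hy'
  -- the fundamental inequality
  have hkey := le_trans (hsub w hwC hwcs htsuppΩ hwnn) (hsuper w hwC hwcs htsuppΩ hwnn)
  -- continuity of gradients
  have hgcont : ∀ (h : EuclideanSpace ℝ (Fin N) → ℝ), ContDiffOn ℝ 1 h Ω →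
      ContinuousOn (gradient h) Ω := by
    intro h hh
    have h1 : ContinuousOn (fderiv ℝ h) Ω := hh.continuousOn_fderiv_of_isOpen hΩo le_rfl
    exact (InnerProductSpace.toDual ℝ (EuclideanSpace ℝ (Fin N))).symm.continuous.comp_continuousOn h1
  have hgwcont : Continuous (gradient w) := by
    have h1 : Continuous (fderiv ℝ w) := hwC.continuous_fderiv one_ne_zero
    exact (InnerProductSpace.toDual ℝ (EuclideanSpace ℝ (Fin N))).symm.continuous.comp h1
  have hgw0 : ∀ x, x ∉ tsupport w → gradient w x = 0 := by
    intro x hx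
    have hfd : fderiv ℝ w x = 0 := by
      by_contra hne
      exact hx (support_fderiv_subset ℝ hne)
    show (InnerProductSpace.toDual ℝ (EuclideanSpace ℝ (Fin N))).symm (fderiv ℝ w x) = 0
    rw [hfd, map_zero]
  -- integrability
  have hintegrable : ∀ e : ℝ, -1 < e → ∀ (h : EuclideanSpace ℝ (Fin N) → ℝ),
      ContDiffOn ℝ 1 h Ω →
      IntegrableOn (fun x => ‖gradient h x‖ ^ e *
        (inner ℝ (gradient h x) (gradient w x) : ℝ)) Ω volume := by
    intro e he h hh
    have hcont : ContinuousOn (fun x => ‖gradient h x‖ ^ e *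
        (inner ℝ (gradient h x) (gradient w x) : ℝ)) Ω :=
      contOn_integrand e he (hgcont h hh) hgwcont.continuousOn
    have h1 : IntegrableOn (fun x => ‖gradient h x‖ ^ e *
        (inner ℝ (gradient h x) (gradient w x) : ℝ)) (tsupport w) volume :=
      (hcont.mono htsuppΩ).integrableOn_compact hwcs
    have h2 : IntegrableOn (fun x => ‖gradient h x‖ ^ e *
        (inner ℝ (gradient h x) (gradient w x) : ℝ)) (Ω \ tsupport w) volume := by
      refine IntegrableOn.congr_fun integrableOn_zero (fun x hx => ?_)
        (hΩo.measurableSet.diff (isClosed_closure).measurableSet)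
      rw [hgw0 x hx.2, inner_zero_right, mul_zero]
    exact (h1.union h2).mono_set (fun x hx => by
      by_cases hxw : x ∈ tsupport w
      · exact Or.inl hxw
      · exact Or.inr ⟨hx, hxw⟩)
  set t1 : EuclideanSpace ℝ (Fin N) → ℝ := fun x =>
    ‖gradient u x‖ ^ (p - 2) * (inner ℝ (gradient u x) (gradient w x) : ℝ) with ht1
  set t2 : EuclideanSpace ℝ (Fin N) → ℝ := fun x =>
    ‖gradient u x‖ ^ (q - 2) * (inner ℝ (gradient u x) (gradient w x) : ℝ) with ht2
  set t3 : EuclideanSpace ℝ (Fin N) → ℝ := fun x =>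
    ‖gradient v x‖ ^ (p - 2) * (inner ℝ (gradient v x) (gradient w x) : ℝ) with ht3
  set t4 : EuclideanSpace ℝ (Fin N) → ℝ := fun x =>
    ‖gradient v x‖ ^ (q - 2) * (inner ℝ (gradient v x) (gradient w x) : ℝ) with ht4
  have hi1 : IntegrableOn t1 Ω volume := hintegrable (p-2) hep u hu
  have hi2 : IntegrableOn t2 Ω volume := hintegrable (q-2) heq u hu
  have hi3 : IntegrableOn t3 Ω volume := hintegrable (p-2) hep v hv
  have hi4 : IntegrableOn t4 Ω volume := hintegrable (q-2) heq v hv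
  -- the combined integrand
  set j : EuclideanSpace ℝ (Fin N) → ℝ := fun x =>
    t1 x + t2 x - (t3 x + t4 x) with hjdef
  have hjint : IntegrableOn j Ω volume := (hi1.add hi2).sub (hi3.add hi4)
  have hi12 : IntegrableOn (fun x => t1 x + t2 x) Ω volume := hi1.add hi2
  have hi34 : IntegrableOn (fun x => t3 x + t4 x) Ω volume := hi3.add hi4
  have hsplit : ∫ x in Ω, j x =
      ((∫ x in Ω, t1 x) + ∫ x in Ω, t2 x) - ((∫ x in Ω, t3 x) + ∫ x in Ω, t4 x) := by
    have e1 : ∫ x in Ω, j x = (∫ x in Ω, t1 x + t2 x) - ∫ x in Ω, t3 x + t4 x :=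
      integral_sub hi12 hi34
    rw [e1, integral_add hi1 hi2, integral_add hi3 hi4]
  have hjnn : 0 ≤ ∫ x in Ω, j x := by
    rw [hsplit]
    have hk2 := hkey
    linarith [hk2]
  -- pointwise nonpositivity
  have hinner_flip : ∀ a b : EuclideanSpace ℝ (Fin N),
      (inner ℝ a (a - b) : ℝ) = - inner ℝ a (b - a) := by
    intro a b
    rw [← neg_sub b a, inner_neg_right]
  have hjle : ∀ x ∈ Ω, j x ≤ 0 := by
    intro x hx
    have hSp := S_nonneg (p-2) hep (gradient u x) (gradient v x)
    have hSq := S_nonneg (q-2) heq (gradient u x) (gradient v x)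
    rw [hinner_flip (gradient u x) (gradient v x)] at hSp hSq
    have hc : (0:ℝ) ≤ 2 * max (g x) 0 := by positivity
    rw [hjdef]
    simp only [ht1, ht2, ht3, ht4, hgradw x hx, real_inner_smul_right]
    nlinarith [mul_nonneg hc (add_nonneg hSp hSq)]
  -- the integral is zero, hence j vanishes a.e. on Ω
  have hj0 : ∫ x in Ω, j x = 0 := by
    refine le_antisymm (integral_nonpos_of_ae ?_) hjnn
    filter_upwards [ae_restrict_mem hΩo.measurableSet] with x hx
    exact hjle x hx
  have haej : ∀ᵐ x ∂(volume.restrict Ω), j x = 0 := by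
    have hnn : 0 ≤ᵐ[volume.restrict Ω] fun x => -(j x) := by
      filter_upwards [ae_restrict_mem hΩo.measurableSet] with x hx
      simpa using hjle x hx
    have hint : Integrable (fun x => -(j x)) (volume.restrict Ω) := hjint.neg
    have hz : ∫ x in Ω, -(j x) = 0 := by rw [integral_neg, hj0, neg_zero]
    have := (integral_eq_zero_iff_of_nonneg_ae hnn hint).1 hz
    filter_upwards [this] with x hx
    have : -(j x) = 0 := hx
    linarith
  -- j vanishes pointwise on Ω
  have hjzero : ∀ y ∈ Ω, j y = 0 := by
    intro y hy
    by_contra hne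
    have hcont : ContinuousOn j Ω := by
      rw [hjdef]
      simp only [ht1, ht2, ht3, ht4]
      exact ((contOn_integrand (p-2) hep (hgcont u hu) hgwcont.continuousOn).add
        (contOn_integrand (q-2) heq (hgcont u hu) hgwcont.continuousOn)).sub
        ((contOn_integrand (p-2) hep (hgcont v hv) hgwcont.continuousOn).add
        (contOn_integrand (q-2) heq (hgcont v hv) hgwcont.continuousOn))
    have hca : ContinuousAt j y := hcont.continuousAt (hΩo.mem_nhds hy)
    have hne' : ∀ᶠ z in nhds y, j z ≠ 0 := hca.eventually_ne hne
    obtain ⟨r, hr0, hball⟩ := Metric.mem_nhds_iff.1 (Filter.inter_mem (hΩo.mem_nhds hy) hne')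
    have hnull : volume.restrict Ω {x | ¬ j x = 0} = 0 := ae_iff.1 haej
    have h1 : volume.restrict Ω (ball y r) = 0 :=
      measure_mono_null (fun z hz => (hball hz).2) hnull
    have h2 : volume.restrict Ω (ball y r) = volume (ball y r) := by
      rw [Measure.restrict_apply measurableSet_ball,
        Set.inter_eq_self_of_subset_left (fun z hz => (hball hz).1)]
    have h3 := measure_ball_pos volume y hr0
    rw [← h2, h1] at h3
    exact lt_irrefl 0 h3
  -- the set U
  have hgcontOn : ContinuousOn g Ω :=
    (hv.continuousOn.sub hu.continuousOn).sub continuousOn_const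
  set U : Set (EuclideanSpace ℝ (Fin N)) := Ω ∩ g ⁻¹' (Set.Ioi 0) with hUdef
  have hUopen : IsOpen U := hgcontOn.isOpen_inter_preimage hΩo isOpen_Ioi
  have hUsub : U ⊆ Ω := Set.inter_subset_left
  have hUK : U ⊆ K := by
    intro x hx
    have hgx : 0 < g x := hx.2
    rw [hgdef] at hgx
    simp only at hgx
    exact ⟨hx.1, by linarith⟩
  have hx0U : x0 ∈ U := by
    refine ⟨hx0, ?_⟩
    show g x0 ∈ Set.Ioi (0:ℝ)
    rw [hgdef]
    simp only [Set.mem_Ioi, hεdef]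
    linarith
  -- gradients agree on U
  have hgradeq : ∀ y ∈ U, gradient u y = gradient v y := by
    intro y hyU
    have hyΩ := hUsub hyU
    have hgy : (0:ℝ) < g y := hyU.2
    by_contra hne
    have hSq := S_pos (q-2) heq (a := gradient u y) (b := gradient v y) hne
    have hSp := S_nonneg (p-2) hep (gradient u y) (gradient v y)
    rw [hinner_flip (gradient u y) (gradient v y)] at hSp hSq
    have hz := hjzero y hyΩ
    rw [hjdef] at hz
    simp only [ht1, ht2, ht3, ht4, hgradw y hyΩ, real_inner_smul_right] at hz
    have hc : (0:ℝ) < 2 * max (g y) 0 := by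
      rw [max_eq_left hgy.le]; linarith
    nlinarith [mul_pos hc (add_pos_of_nonneg_of_pos hSp hSq)]
  -- local constancy of v - u on U
  have hlocconst : ∀ z ∈ U, ∃ r > 0, ball z r ⊆ U ∧
      ∀ y ∈ ball z r, v y - u y = v z - u z := by
    intro z hz
    obtain ⟨r, hr0, hrU⟩ := Metric.isOpen_iff.1 hUopen z hz
    refine ⟨r, hr0, hrU, ?_⟩
    intro y hy
    have hdiff : DifferentiableOn ℝ (fun t => v t - u t) (ball z r) := fun t ht =>
      ((hdv t (hUsub (hrU ht))).sub (hdu t (hUsub (hrU ht)))).differentiableWithinAt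
    have hfzero : ∀ t ∈ ball z r, fderivWithin ℝ (fun t => v t - u t) (ball z r) t = 0 := by
      intro t ht
      rw [fderivWithin_of_isOpen isOpen_ball ht]
      have h1 : fderiv ℝ (fun t => v t - u t) t = fderiv ℝ v t - fderiv ℝ u t :=
        fderiv_sub (hdv t (hUsub (hrU ht))) (hdu t (hUsub (hrU ht)))
      have h2 : fderiv ℝ u t = fderiv ℝ v t := by
        have h3 := congrArg (InnerProductSpace.toDual ℝ (EuclideanSpace ℝ (Fin N)))
          (hgradeq t (hrU ht))
        simpa only [gradient, LinearIsometryEquiv.apply_symm_apply] using h3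
      rw [h1, h2, sub_self]
    exact Convex.is_const_of_fderivWithin_eq_zero (convex_ball z r) hdiff hfzero hy (mem_ball_self hr0)
  -- the connected component of x0 in U
  set C : Set (EuclideanSpace ℝ (Fin N)) := connectedComponentIn U x0 with hCdef
  have hCopen : IsOpen C := hUopen.connectedComponentIn
  have hCU : C ⊆ U := connectedComponentIn_subset _ _
  have hx0C : x0 ∈ C := mem_connectedComponentIn hx0U
  have hCconst : ∀ y ∈ C, v y - u y = v x0 - u x0 := by
    by_contra hcon
    push_neg at hcon
    obtain ⟨y, hyC, hyne⟩ := hcon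
    set O1 : Set (EuclideanSpace ℝ (Fin N)) := {z | z ∈ U ∧ v z - u z = v x0 - u x0} with hO1def
    set O2 : Set (EuclideanSpace ℝ (Fin N)) := {z | z ∈ U ∧ v z - u z ≠ v x0 - u x0} with hO2def
    have hO1 : IsOpen O1 := by
      rw [Metric.isOpen_iff]
      intro z hz
      obtain ⟨r, hr0, hrU, hconst⟩ := hlocconst z hz.1
      exact ⟨r, hr0, fun y' hy' => ⟨hrU hy', by rw [hconst y' hy', hz.2]⟩⟩
    have hO2 : IsOpen O2 := by
      rw [Metric.isOpen_iff]
      intro z hz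
      obtain ⟨r, hr0, hrU, hconst⟩ := hlocconst z hz.1
      exact ⟨r, hr0, fun y' hy' => ⟨hrU hy', by rw [hconst y' hy']; exact hz.2⟩⟩
    have hpre : IsPreconnected C := isPreconnected_connectedComponentIn
    have hsub2 : C ⊆ O1 ∪ O2 := by
      intro z hz
      by_cases h : v z - u z = v x0 - u x0
      · exact Or.inl ⟨hCU hz, h⟩
      · exact Or.inr ⟨hCU hz, h⟩
    have h1 : (C ∩ O1).Nonempty := ⟨x0, hx0C, hx0U, rfl⟩
    have h2 : (C ∩ O2).Nonempty := ⟨y, hyC, hCU hyC, hyne⟩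
    obtain ⟨z, hz⟩ := hpre O1 O2 hO1 hO2 hsub2 h1 h2
    exact hz.2.2.2 hz.2.1.2
  have hval2ε : ∀ y ∈ C, v y - u y = 2 * ε := by
    intro y hy
    rw [hCconst y hy, hεdef]
    ring
  -- C is nonempty and not the whole space
  have hCne : C.Nonempty := ⟨x0, hx0C⟩
  haveI : Nonempty (Fin N) := ⟨⟨0, hN⟩⟩
  haveI : Nontrivial (EuclideanSpace ℝ (Fin N)) := by
    refine ⟨0, EuclideanSpace.single ⟨0, hN⟩ (1:ℝ), fun h => ?_⟩
    have hn := congrArg norm h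
    rw [norm_zero, EuclideanSpace.norm_single] at hn
    norm_num at hn
  have hCnu : C ≠ Set.univ := by
    intro hCuniv
    have : IsCompact (Set.univ : Set (EuclideanSpace ℝ (Fin N))) := by
      have hKuniv : K = Set.univ := Set.eq_univ_of_univ_subset (hCuniv ▸ (hCU.trans hUK))
      rw [← hKuniv]
      exact hKc
    exact NoncompactSpace.noncompact_univ this
  -- a frontier point of C
  obtain ⟨y, hyfr⟩ := nonempty_frontier_iff.2 ⟨hCne, hCnu⟩
  have hycl : y ∈ closure C := hyfr.1
  have hyC : y ∉ C := by
    rw [hCopen.frontier_eq] at hyfr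
    exact hyfr.2
  have hyK : y ∈ K := hKc.isClosed.closure_subset_iff.2 (hCU.trans hUK) hycl
  have hyΩ : y ∈ Ω := hKΩ hyK
  -- value at y
  have hval : v y - u y = 2 * ε := by
    have hne : (nhdsWithin y C).NeBot := mem_closure_iff_nhdsWithin_neBot.1 hycl
    have h1 : Filter.Tendsto (fun z => v z - u z) (nhdsWithin y C) (nhds (v y - u y)) :=
      (((hv.continuousOn.sub hu.continuousOn).continuousAt
        (hΩo.mem_nhds hyΩ)).continuousWithinAt).tendsto
    have h2 : Filter.Tendsto (fun z => v z - u z) (nhdsWithin y C) (nhds (2 * ε)) := by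
      apply Filter.Tendsto.congr' _ tendsto_const_nhds
      filter_upwards [self_mem_nhdsWithin] with z hz
      exact (hval2ε z hz).symm
    exact tendsto_nhds_unique h1 h2
  have hyU : y ∈ U := by
    refine ⟨hyΩ, ?_⟩
    show g y ∈ Set.Ioi (0:ℝ)
    rw [hgdef]
    simp only [Set.mem_Ioi]
    linarith
  -- derive the contradiction: y must be in C
  obtain ⟨r, hr0, hrU⟩ := Metric.isOpen_iff.1 hUopen y hyU
  obtain ⟨z, hzb, hzC⟩ : (ball y r ∩ C).Nonempty := by
    rcases (_root_.mem_closure_iff).1 hycl (ball y r) isOpen_ball (mem_ball_self hr0)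
      with ⟨z, hz1, hz2⟩
    exact ⟨z, hz1, hz2⟩
  have hunion : IsPreconnected (ball y r ∪ C) :=
    IsPreconnected.union z hzb hzC (convex_ball y r).isPreconnected
      isPreconnected_connectedComponentIn
  have hsubC : ball y r ∪ C ⊆ C := by
    rw [hCdef]
    apply hunion.subset_connectedComponentIn (Or.inr hx0C)
    exact Set.union_subset hrU hCU
  exact hyC (hsubC (Or.inl (mem_ball_self hr0)))
end
end

section
/- Let N ≥ 1 be an integer, let p, q, s be real exponents with 1 < q < s ≤ p and q < p, let Ω ⊆ ℝ^N be an exterior domain, and let u ∈ C¹(Ω) be positive, bounded, and satisfy -Δ_p u - Δ_q u ≥ u^{s-1} weakly in Ω. Then there exists a constant C > 0, depending only on N, p, q, s and sup_Ω u, such that ∫_{B(x₀, R)} u^{s-q} dx ≤ C R^{N-q} for every center x₀ ∈ ℝ^N and radius R ≥ 1 with B(x₀, 2R) ⊆ Ω. -/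
open MeasureTheory Filter Metric

noncomputable section

open Real
/-- scaled Young inequality: X*Y ≤ ε X^{r'} + C Y^r -/
lemma young_eps {r : ℝ} (hr : 1 < r) {ε X Y : ℝ} (hε : 0 < ε) (hX : 0 ≤ X) (hY : 0 ≤ Y) :
    X * Y ≤ ε * X ^ (r / (r - 1)) +
      (1 / (r * (ε * (r / (r - 1))) ^ (r - 1))) * Y ^ r := by
  have hr1 : (0:ℝ) < r - 1 := by linarith
  have hr0 : (0:ℝ) < r := by linarith
  set r' := r / (r - 1) with hr'def
  have hr'pos : 0 < r' := div_pos hr0 hr1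
  have hconj : r'.HolderConjugate r := by
    exact ((Real.holderConjugate_iff_eq_conjExponent hr).2 hr'def).symm
  set c : ℝ := (ε * r') ^ ((r - 1) / r) with hcdef
  have hbase : 0 < ε * r' := mul_pos hε hr'pos
  have hc : 0 < c := rpow_pos_of_pos hbase _
  have key := Real.young_inequality_of_nonneg (mul_nonneg hc.le hX)
    (div_nonneg hY hc.le) hconj
  have hXY : c * X * (Y / c) = X * Y := by field_simp <;> ring
  rw [hXY] at key
  have h1 : (c * X) ^ r' / r' = ε * X ^ r' := by
    rw [Real.mul_rpow hc.le hX, hcdef, ← Real.rpow_mul hbase.le]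
    have : (r - 1) / r * r' = 1 := by rw [hr'def]; field_simp
    rw [this, Real.rpow_one]
    field_simp
  have h2 : (Y / c) ^ r / r = (1 / (r * (ε * r') ^ (r - 1))) * Y ^ r := by
    rw [Real.div_rpow hY hc.le, hcdef, ← Real.rpow_mul hbase.le]
    have : (r - 1) / r * r = r - 1 := by field_simp <;> ring
    rw [this, div_div]
    ring
  rw [h1, h2] at key
  exact key

/-- The constant in the pointwise Young estimate. -/
noncomputable def Bconst (q r : ℝ) (n : ℕ) : ℝ :=
  (n : ℝ) ^ r * (1 / (r * ((q - 1) * (r / (r - 1))) ^ (r - 1)))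

lemma Bconst_pos {q r : ℝ} (hq : 1 < q) (hr : 1 < r) (n : ℕ) (hn : 0 < n) :
    0 < Bconst q r n := by
  have h1 : (0:ℝ) < r - 1 := by linarith
  have h2 : (0:ℝ) < (q - 1) * (r / (r - 1)) := mul_pos (by linarith) (div_pos (by linarith) h1)
  have h3 : (0:ℝ) < ((q - 1) * (r / (r - 1))) ^ (r - 1) := Real.rpow_pos_of_pos h2 _
  have h4 : (0:ℝ) < (n:ℝ) ^ r := Real.rpow_pos_of_pos (by exact_mod_cast hn) _
  unfold Bconst
  positivity

lemma Bconst_nonneg {q r : ℝ} (hq : 1 < q) (hr : 1 < r) (n : ℕ) : 0 ≤ Bconst q r n := by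
  have h1 : (0:ℝ) < r - 1 := by linarith
  have h2 : (0:ℝ) < (q - 1) * (r / (r - 1)) := mul_pos (by linarith) (div_pos (by linarith) h1)
  have h3 : (0:ℝ) < ((q - 1) * (r / (r - 1))) ^ (r - 1) := Real.rpow_pos_of_pos h2 _
  have h4 : (0:ℝ) ≤ (n:ℝ) ^ r := Real.rpow_nonneg (by positivity) _
  unfold Bconst
  positivity

lemma young_pt {q r : ℝ} (hq : 1 < q) (hqr : q ≤ r) {n : ℕ} (hn : r + 1 ≤ (n:ℝ))
    {v t a w : ℝ} (hv : 0 < v) (ht : 0 ≤ t) (ha : 0 ≤ a) (hw : 0 ≤ w) :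
    (n:ℝ) * v ^ (1 - q) * t ^ ((n:ℝ) - 1) * a ^ (r - 1) * w ≤
      (q - 1) * v ^ (-q) * t ^ (n:ℝ) * a ^ r +
      Bconst q r n * v ^ (r - q) * t ^ ((n:ℝ) - r) * w ^ r := by
  have hr : 1 < r := lt_of_lt_of_le hq hqr
  have hr1 : (0:ℝ) < r - 1 := by linarith
  have hr0 : (0:ℝ) < r := by linarith
  have hrne : r ≠ 0 := ne_of_gt hr0
  have hr1ne : r - 1 ≠ 0 := ne_of_gt hr1
  have hq1 : (0:ℝ) < q - 1 := by linarith
  have hnpos : (0:ℝ) < (n:ℝ) := by linarith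
  have hB := Bconst_nonneg hq hr n
  rcases eq_or_lt_of_le ht with ht0 | htpos
  · rw [← ht0]
    rw [Real.zero_rpow (by linarith : (n:ℝ) - 1 ≠ 0),
        Real.zero_rpow (ne_of_gt hnpos),
        Real.zero_rpow (by linarith : (n:ℝ) - r ≠ 0)]
    simp
  rcases eq_or_lt_of_le ha with ha0 | hapos
  · rw [← ha0]
    rw [Real.zero_rpow (by linarith : r - 1 ≠ 0), Real.zero_rpow (by linarith : r ≠ 0)]
    have h1 : (0:ℝ) ≤ v ^ (r - q) := Real.rpow_nonneg (le_of_lt hv) _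
    have h2 : (0:ℝ) ≤ t ^ ((n:ℝ) - r) := Real.rpow_nonneg ht _
    have h3 : (0:ℝ) ≤ w ^ r := Real.rpow_nonneg hw _
    have : 0 ≤ Bconst q r n * v ^ (r - q) * t ^ ((n:ℝ) - r) * w ^ r := by positivity
    simpa using this
  rcases eq_or_lt_of_le hw with hw0 | hwpos
  · rw [← hw0]
    rw [Real.zero_rpow (by linarith : r ≠ 0)]
    have h1 : (0:ℝ) ≤ v ^ (-q) := Real.rpow_nonneg (le_of_lt hv) _
    have h2 : (0:ℝ) ≤ t ^ (n:ℝ) := Real.rpow_nonneg ht _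
    have h3 : (0:ℝ) ≤ a ^ r := Real.rpow_nonneg ha _
    have : 0 ≤ (q - 1) * v ^ (-q) * t ^ (n:ℝ) * a ^ r := by positivity
    simpa using this
  -- main case
  set X : ℝ := v ^ (-(q * (r - 1) / r)) * t ^ ((n:ℝ) * (r - 1) / r) * a ^ (r - 1) with hX
  set Y : ℝ := (n:ℝ) * (v ^ ((r - q) / r) * t ^ ((n:ℝ) / r - 1) * w) with hY
  have hXnn : 0 ≤ X := by
    have h1 := Real.rpow_nonneg (le_of_lt hv) (-(q * (r - 1) / r))
    have h2 := Real.rpow_nonneg ht ((n:ℝ) * (r - 1) / r)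
    have h3 := Real.rpow_nonneg ha (r - 1)
    positivity
  have hYnn : 0 ≤ Y := by
    have h1 := Real.rpow_nonneg (le_of_lt hv) ((r - q) / r)
    have h2 := Real.rpow_nonneg ht ((n:ℝ) / r - 1)
    positivity
  have key := young_eps hr hq1 hXnn hYnn
  have hXY : X * Y = (n:ℝ) * v ^ (1 - q) * t ^ ((n:ℝ) - 1) * a ^ (r - 1) * w := by
    have hv1 : v ^ (-(q * (r - 1) / r)) * v ^ ((r - q) / r) = v ^ (1 - q) := by
      rw [← Real.rpow_add hv]; congr 1; field_simp <;> ring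
    have ht1 : t ^ ((n:ℝ) * (r - 1) / r) * t ^ ((n:ℝ) / r - 1) = t ^ ((n:ℝ) - 1) := by
      rw [← Real.rpow_add htpos]; congr 1; field_simp <;> ring
    calc X * Y = (n:ℝ) * ((v ^ (-(q * (r - 1) / r)) * v ^ ((r - q) / r)) *
        ((t ^ ((n:ℝ) * (r - 1) / r) * t ^ ((n:ℝ) / r - 1)) * (a ^ (r - 1) * w))) := by ring
      _ = _ := by rw [hv1, ht1]; ring
  have hXr' : X ^ (r / (r - 1)) = v ^ (-q) * t ^ (n:ℝ) * a ^ r := by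
    rw [hX, Real.mul_rpow (by positivity) (Real.rpow_nonneg ha _),
        Real.mul_rpow (Real.rpow_nonneg hv.le _) (Real.rpow_nonneg ht _),
        ← Real.rpow_mul hv.le, ← Real.rpow_mul ht, ← Real.rpow_mul ha]
    have e1 : -(q * (r - 1) / r) * (r / (r - 1)) = -q := by field_simp <;> ring
    have e2 : (n:ℝ) * (r - 1) / r * (r / (r - 1)) = (n:ℝ) := by field_simp <;> ring
    have e3 : (r - 1) * (r / (r - 1)) = r := by field_simp <;> ring
    rw [e1, e2, e3]
  have hYr : Y ^ r = (n:ℝ) ^ r * (v ^ (r - q) * t ^ ((n:ℝ) - r) * w ^ r) := by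
    rw [hY, Real.mul_rpow hnpos.le (by positivity),
        Real.mul_rpow (by positivity) hw,
        Real.mul_rpow (Real.rpow_nonneg hv.le _) (Real.rpow_nonneg ht _),
        ← Real.rpow_mul hv.le, ← Real.rpow_mul ht]
    have e1 : (r - q) / r * r = r - q := by field_simp <;> ring
    have e2 : ((n:ℝ) / r - 1) * r = (n:ℝ) - r := by field_simp <;> ring
    rw [e1, e2]
  rw [hXY, hXr', hYr] at key
  calc (n:ℝ) * v ^ (1 - q) * t ^ ((n:ℝ) - 1) * a ^ (r - 1) * w ≤ _ := key
    _ = _ := by unfold Bconst; ring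






/-- Pointwise estimate combining Cauchy-Schwarz and Young's inequality. -/
lemma pointwise_est {q r : ℝ} (hq1 : 1 < q) (hqr : q ≤ r) {n : ℕ} (hrn : r + 1 ≤ (n:ℝ))
    {v t a w d M : ℝ} (hv : 0 < v) (hvM : v ≤ M) (ht0 : 0 ≤ t) (ht1 : t ≤ 1)
    (ha0 : 0 ≤ a) (hw : 0 < w) (hd : d ≤ w * a) :
    a ^ (r - 2) * ((1 - q) * v ^ (-q) * t ^ n * a ^ 2 + (n:ℝ) * v ^ (1 - q) * t ^ (n - 1) * d)
      ≤ Bconst q r n * M ^ (r - q) * w ^ r := by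
  have hr1 : 1 < r := lt_of_lt_of_le hq1 hqr
  have hB := Bconst_nonneg hq1 hr1 n
  have har : 0 ≤ a ^ (r - 2) := Real.rpow_nonneg ha0 _
  have hA2 : a ^ (r - 2) * a ^ 2 = a ^ r := by
    rcases eq_or_lt_of_le ha0 with h0 | hpos
    · rw [← h0, Real.zero_rpow (by linarith : r ≠ 0)]
      norm_num
    · rw [← Real.rpow_natCast a 2, ← Real.rpow_add hpos]
      congr 1
      push_cast
      ring
  have hA1 : a ^ (r - 2) * a = a ^ (r - 1) := by
    rcases eq_or_lt_of_le ha0 with h0 | hpos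
    · rw [← h0, Real.zero_rpow (by linarith : r - 1 ≠ 0)]
      ring
    · rw [show a ^ (r - 2) * a = a ^ (r - 2) * a ^ (1:ℝ) by rw [Real.rpow_one],
          ← Real.rpow_add hpos]
      congr 1
      ring
  have hcoef : (0:ℝ) ≤ (n:ℝ) * v ^ (1 - q) * t ^ (n - 1) * a ^ (r - 2) := by
    have h1 := Real.rpow_nonneg hv.le (1 - q)
    have h2 : (0:ℝ) ≤ t ^ (n - 1) := pow_nonneg ht0 _
    positivity
  have step1 : a ^ (r - 2) * ((1 - q) * v ^ (-q) * t ^ n * a ^ 2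
        + (n:ℝ) * v ^ (1 - q) * t ^ (n - 1) * d)
      ≤ (1 - q) * v ^ (-q) * t ^ n * a ^ r
        + (n:ℝ) * v ^ (1 - q) * t ^ (n - 1) * a ^ (r - 1) * w := by
    have h2' : (n:ℝ) * v ^ (1 - q) * t ^ (n - 1) * a ^ (r - 2) * d
        ≤ (n:ℝ) * v ^ (1 - q) * t ^ (n - 1) * a ^ (r - 2) * (w * a) :=
      mul_le_mul_of_nonneg_left hd hcoef
    calc a ^ (r - 2) * ((1 - q) * v ^ (-q) * t ^ n * a ^ 2
          + (n:ℝ) * v ^ (1 - q) * t ^ (n - 1) * d)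
        = (1 - q) * v ^ (-q) * t ^ n * (a ^ (r - 2) * a ^ 2)
          + (n:ℝ) * v ^ (1 - q) * t ^ (n - 1) * a ^ (r - 2) * d := by ring
      _ ≤ (1 - q) * v ^ (-q) * t ^ n * (a ^ (r - 2) * a ^ 2)
          + (n:ℝ) * v ^ (1 - q) * t ^ (n - 1) * a ^ (r - 2) * (w * a) := by linarith
      _ = (1 - q) * v ^ (-q) * t ^ n * a ^ r
          + (n:ℝ) * v ^ (1 - q) * t ^ (n - 1) * (a ^ (r - 2) * a) * w := by
            rw [hA2]; ring
      _ = _ := by rw [hA1]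
  have hyoung := young_pt hq1 hqr hrn hv ht0 ha0 hw.le (w := w)
  have htn : t ^ ((n:ℝ)) = t ^ n := Real.rpow_natCast t n
  have htn1 : t ^ ((n:ℝ) - 1) = t ^ (n - 1) := by
    have h1 : (1:ℕ) ≤ n := by
      by_contra h
      push_cast [Nat.lt_one_iff.mp (not_le.mp h)] at hrn
      linarith
    rw [show ((n:ℝ) - 1) = ((n - 1 : ℕ) : ℝ) by push_cast [h1]; ring]
    exact Real.rpow_natCast t (n - 1)
  rw [htn, htn1] at hyoung
  have step3 : Bconst q r n * v ^ (r - q) * t ^ ((n:ℝ) - r) * w ^ r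
      ≤ Bconst q r n * M ^ (r - q) * w ^ r := by
    have hMpos : 0 < M := lt_of_lt_of_le hv hvM
    have h1 : v ^ (r - q) ≤ M ^ (r - q) :=
      Real.rpow_le_rpow hv.le hvM (by linarith)
    have h2 : t ^ ((n:ℝ) - r) ≤ 1 :=
      Real.rpow_le_one ht0 ht1 (by linarith)
    have h3 : (0:ℝ) ≤ v ^ (r - q) := Real.rpow_nonneg hv.le _
    have h4 : (0:ℝ) ≤ t ^ ((n:ℝ) - r) := Real.rpow_nonneg ht0 _
    have h5 : (0:ℝ) ≤ w ^ r := Real.rpow_nonneg hw.le _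
    calc Bconst q r n * v ^ (r - q) * t ^ ((n:ℝ) - r) * w ^ r
        ≤ Bconst q r n * M ^ (r - q) * 1 * w ^ r := by
          apply mul_le_mul_of_nonneg_right _ h5
          apply mul_le_mul _ h2 h4 _
          · exact mul_le_mul_of_nonneg_left h1 hB
          · positivity
      _ = Bconst q r n * M ^ (r - q) * w ^ r := by ring
  linarith

lemma grad_inner_eq {N : ℕ} (f : EuclideanSpace ℝ (Fin N) → ℝ)
    (x y : EuclideanSpace ℝ (Fin N)) :
    (inner ℝ (gradient f x) y : ℝ) = fderiv ℝ f x y := by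
  simp [gradient, InnerProductSpace.toDual_symm_apply]

lemma grad_norm_eq {N : ℕ} (f : EuclideanSpace ℝ (Fin N) → ℝ)
    (x : EuclideanSpace ℝ (Fin N)) :
    ‖gradient f x‖ = ‖fderiv ℝ f x‖ := by
  simp [gradient]

set_option maxHeartbeats 3200000 in
/-- Ball integral estimate for bounded positive supersolutions of
`-Δ_p u - Δ_q u ≥ u^{s-1}` in exterior domains when `1 < q < s ≤ p`. -/
theorem ball_integral_estimate_bounded
    (N : ℕ) (hN : 1 ≤ N) (p q s : ℝ) (hq1 : 1 < q) (hqs : q < s) (hsp : s ≤ p)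
    (hqp : q < p)
    (Ω : Set (EuclideanSpace ℝ (Fin N))) (hext : IsExteriorDomain Ω)
    (u : EuclideanSpace ℝ (Fin N) → ℝ) (hu : ContDiffOn ℝ 1 u Ω)
    (hupos : ∀ x ∈ Ω, 0 < u x) (hbdd : ∃ M : ℝ, ∀ x ∈ Ω, u x ≤ M)
    (hsuper : WeakPQSuper N p q Ω u (fun x => u x ^ (s - 1))) :
    ∃ C > (0 : ℝ), ∀ (x₀ : EuclideanSpace ℝ (Fin N)) (R : ℝ), 1 ≤ R →
      ball x₀ (2 * R) ⊆ Ω →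
      ∫ x in ball x₀ R, u x ^ (s - q) ≤ C * R ^ ((N : ℝ) - q) := by
  obtain ⟨hΩopen, hΩconn, hRext⟩ := hext
  obtain ⟨M₀, hM₀⟩ := hbdd
  set M : ℝ := max M₀ 1 with hMdef
  have hM1 : (1:ℝ) ≤ M := le_max_right _ _
  have hMpos : (0:ℝ) < M := lt_of_lt_of_le one_pos hM1
  have hMle : ∀ x ∈ Ω, u x ≤ M := fun x hx => le_trans (hM₀ x hx) (le_max_left _ _)
  -- the model bump function and a bound for its derivative
  set b : ContDiffBump (0 : EuclideanSpace ℝ (Fin N)) :=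
    ⟨1, 3/2, one_pos, by norm_num⟩ with hbdef
  obtain ⟨K₀, hK₀⟩ : ∃ K₀, ∀ y, ‖fderiv ℝ (⇑b) y‖ ≤ K₀ :=
    (HasCompactSupport.fderiv (𝕜 := ℝ) b.hasCompactSupport).exists_bound_of_continuous
      ((b.contDiff (n := 1)).continuous_fderiv one_ne_zero)
  set K : ℝ := max K₀ 1 with hKdef
  have hK1 : (1:ℝ) ≤ K := le_max_right _ _
  have hKpos : (0:ℝ) < K := lt_of_lt_of_le one_pos hK1
  have hK : ∀ y, ‖fderiv ℝ (⇑b) y‖ ≤ K := fun y => le_trans (hK₀ y) (le_max_left _ _)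
  -- the exponent of the cutoff
  set n : ℕ := ⌈p⌉₊ + 2 with hndef
  have hnp : p + 1 ≤ (n:ℝ) := by
    have := Nat.le_ceil p
    push_cast [hndef]
    linarith
  have hp1 : 1 < p := lt_trans hq1 hqp
  have hnq : q + 1 ≤ (n:ℝ) := by linarith
  have hcNnn : (0:ℝ) ≤ (volume (ball (0 : EuclideanSpace ℝ (Fin N)) 1)).toReal :=
    ENNReal.toReal_nonneg
  set cN : ℝ := (volume (ball (0 : EuclideanSpace ℝ (Fin N)) 1)).toReal with hcNdef
  set Tp : ℝ := Bconst q p n * M ^ (p - q) * K ^ p * (2 ^ N * cN) with hTpdef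
  set Tq : ℝ := Bconst q q n * M ^ (q - q) * K ^ q * (2 ^ N * cN) with hTqdef
  have hTpnn : 0 ≤ Tp := by
    have h1 := Bconst_nonneg hq1 hp1 n
    have h2 := Real.rpow_nonneg hMpos.le (p - q)
    have h3 := Real.rpow_nonneg hKpos.le p
    positivity
  have hTqnn : 0 ≤ Tq := by
    have h1 := Bconst_nonneg hq1 hq1 n
    have h2 := Real.rpow_nonneg hMpos.le (q - q)
    have h3 := Real.rpow_nonneg hKpos.le q
    positivity
  refine ⟨Tp + Tq + 1, by positivity, ?_⟩
  intro x₀ R hR hsub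
  have hR0 : (0:ℝ) < R := lt_of_lt_of_le one_pos hR
  have hRne : R ≠ 0 := ne_of_gt hR0
  -- the scaled cutoff function
  set η : EuclideanSpace ℝ (Fin N) → ℝ := fun x => b (R⁻¹ • (x - x₀)) with hηdef
  have hηsmooth : ContDiff ℝ 1 η :=
    (b.contDiff (n := 1)).comp ((contDiff_id.sub contDiff_const).const_smul R⁻¹)
  have hηnn : ∀ x, 0 ≤ η x := fun x => b.nonneg
  have hηle1 : ∀ x, η x ≤ 1 := fun x => b.le_one
  have hηsupp : Function.support η ⊆ closedBall x₀ (3 / 2 * R) := by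
    intro x hx
    have : R⁻¹ • (x - x₀) ∈ Function.support ⇑b := hx
    rw [b.support_eq] at this
    have hlt : ‖R⁻¹ • (x - x₀)‖ < 3 / 2 := by
      simpa [mem_ball, dist_eq_norm, hbdef] using this
    rw [norm_smul, norm_inv, Real.norm_eq_abs, abs_of_pos hR0] at hlt
    have : ‖x - x₀‖ < 3 / 2 * R := by
      rw [inv_mul_lt_iff₀ hR0] at hlt
      linarith [hlt]
    rw [mem_closedBall, dist_eq_norm]
    linarith
  have hηts : tsupport η ⊆ closedBall x₀ (3 / 2 * R) :=
    closure_minimal hηsupp Metric.isClosed_closedBall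
  have hcb : closedBall x₀ (3 / 2 * R) ⊆ ball x₀ (2 * R) := by
    intro y hy
    rw [mem_closedBall] at hy
    rw [mem_ball]
    linarith
  have hηtsΩ : tsupport η ⊆ Ω := fun x hx => hsub (hcb (hηts hx))
  have hηone : ∀ x ∈ closedBall x₀ R, η x = 1 := by
    intro x hx
    apply b.one_of_mem_closedBall
    rw [mem_closedBall] at hx ⊢
    rw [dist_eq_norm] at hx ⊢
    rw [sub_zero, norm_smul, norm_inv, Real.norm_eq_abs, abs_of_pos hR0]
    rw [inv_mul_le_iff₀ hR0]
    simpa [hbdef] using hx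
  have hηfd : ∀ x, HasFDerivAt η (fderiv ℝ η x) x :=
    fun x => ((hηsmooth.differentiable one_ne_zero) x).hasFDerivAt
  have hηderiv : ∀ x, ‖fderiv ℝ η x‖ ≤ K / R := by
    intro x
    have hA : HasFDerivAt (fun y : EuclideanSpace ℝ (Fin N) => R⁻¹ • (y - x₀))
        (R⁻¹ • ContinuousLinearMap.id ℝ (EuclideanSpace ℝ (Fin N))) x :=
      ((hasFDerivAt_id x).sub_const x₀).const_smul R⁻¹
    have hB : HasFDerivAt (⇑b) (fderiv ℝ (⇑b) (R⁻¹ • (x - x₀))) (R⁻¹ • (x - x₀)) :=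
      (((b.contDiff (n := 1)).differentiable one_ne_zero) _).hasFDerivAt
    have hcomp : HasFDerivAt η
        ((fderiv ℝ (⇑b) (R⁻¹ • (x - x₀))).comp
          (R⁻¹ • ContinuousLinearMap.id ℝ (EuclideanSpace ℝ (Fin N)))) x :=
      by have := hB.comp x hA; exact this
    rw [hcomp.fderiv]
    have h1 := ContinuousLinearMap.opNorm_comp_le (fderiv ℝ (⇑b) (R⁻¹ • (x - x₀)))
      (R⁻¹ • ContinuousLinearMap.id ℝ (EuclideanSpace ℝ (Fin N)))
    have h2 : ‖R⁻¹ • ContinuousLinearMap.id ℝ (EuclideanSpace ℝ (Fin N))‖ ≤ R⁻¹ := by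
      refine le_trans (ContinuousLinearMap.opNorm_smul_le _ _) ?_
      rw [norm_inv, Real.norm_eq_abs, abs_of_pos hR0]
      calc R⁻¹ * ‖ContinuousLinearMap.id ℝ (EuclideanSpace ℝ (Fin N))‖ ≤ R⁻¹ * 1 :=
            mul_le_mul_of_nonneg_left ContinuousLinearMap.norm_id_le (inv_nonneg.2 hR0.le)
        _ = R⁻¹ := mul_one _
    have h3 : ‖fderiv ℝ (⇑b) (R⁻¹ • (x - x₀))‖ *
        ‖R⁻¹ • ContinuousLinearMap.id ℝ (EuclideanSpace ℝ (Fin N))‖ ≤ K * R⁻¹ :=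
      mul_le_mul (hK _) h2 (norm_nonneg _) hKpos.le
    rw [div_eq_mul_inv]
    exact le_trans h1 h3
  -- the test function
  set φ : EuclideanSpace ℝ (Fin N) → ℝ := fun x => u x ^ (1 - q) * η x ^ n with hφdef
  have hnne : n ≠ 0 := by rw [hndef]; omega
  have hsupp_φη : Function.support φ ⊆ Function.support η := by
    intro x hx
    simp only [Function.mem_support] at hx ⊢
    intro h0
    apply hx
    simp [hφdef, h0, hnne]
  have htsφ : tsupport φ ⊆ closedBall x₀ (3 / 2 * R) :=
    le_trans (closure_mono hsupp_φη) hηts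
  have htsφΩ : tsupport φ ⊆ Ω := fun x hx => hsub (hcb (htsφ hx))
  have hφcs : HasCompactSupport φ :=
    IsCompact.of_isClosed_subset (isCompact_closedBall _ _) (isClosed_tsupport φ) htsφ
  have hφnn : ∀ x, 0 ≤ φ x := by
    intro x
    by_cases hx : x ∈ Function.support η
    · have hxu : 0 < u x := hupos x (hηtsΩ (subset_closure hx))
      have h1 : 0 ≤ u x ^ (1 - q) := (Real.rpow_pos_of_pos hxu _).le
      have h2 : 0 ≤ η x ^ n := pow_nonneg (hηnn x) n
      exact mul_nonneg h1 h2
    · have h0 : η x = 0 := Function.notMem_support.mp hx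
      simp [hφdef, h0, hnne]
  have hφC1 : ContDiff ℝ 1 φ := by
    rw [contDiff_iff_contDiffAt]
    intro x
    by_cases hx : x ∈ tsupport η
    · have hxΩ : x ∈ Ω := hηtsΩ hx
      have hux : ContDiffAt ℝ 1 u x := hu.contDiffAt (hΩopen.mem_nhds hxΩ)
      exact (hux.rpow_const_of_ne (ne_of_gt (hupos x hxΩ))).mul (hηsmooth.contDiffAt.pow n)
    · have hev : φ =ᶠ[nhds x] fun _ => (0:ℝ) := by
        filter_upwards [(isClosed_tsupport η).isOpen_compl.mem_nhds hx] with y hy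
        have h0 : η y = 0 := image_eq_zero_of_notMem_tsupport hy
        simp [hφdef, h0, hnne]
      exact (contDiffAt_const (c := (0:ℝ))).congr_of_eventuallyEq hev
  have hufd : ∀ x ∈ Ω, HasFDerivAt u (fderiv ℝ u x) x := fun x hx =>
    ((hu.contDiffAt (hΩopen.mem_nhds hx)).differentiableAt one_ne_zero).hasFDerivAt
  -- the inner product formula on Ω
  have hinner : ∀ x ∈ Ω, (inner ℝ (gradient u x) (gradient φ x) : ℝ) =
      (1 - q) * u x ^ (-q) * η x ^ n * ‖gradient u x‖ ^ 2
      + (n:ℝ) * u x ^ (1 - q) * η x ^ (n - 1) * (fderiv ℝ η x (gradient u x)) := by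
    intro x hx
    have hux := hupos x hx
    have hfu : HasFDerivAt (fun y => u y ^ (1 - q))
        (((1 - q) * u x ^ (1 - q - 1)) • fderiv ℝ u x) x :=
      (hufd x hx).rpow_const (Or.inl hux.ne')
    have hfη : HasFDerivAt (fun y => η y ^ n) (((n:ℝ) * η x ^ (n - 1)) • fderiv ℝ η x) x :=
      (hasDerivAt_pow n (η x)).comp_hasFDerivAt x (hηfd x)
    have hfφ : HasFDerivAt φ ((u x ^ (1 - q)) • (((n:ℝ) * η x ^ (n - 1)) • fderiv ℝ η x)
        + (η x ^ n) • (((1 - q) * u x ^ (1 - q - 1)) • fderiv ℝ u x)) x := hfu.mul hfη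
    rw [real_inner_comm, grad_inner_eq, hfφ.fderiv]
    have hDu : fderiv ℝ u x (gradient u x) = ‖gradient u x‖ ^ 2 := by
      rw [← grad_inner_eq, real_inner_self_eq_norm_sq]
    simp only [ContinuousLinearMap.add_apply, ContinuousLinearMap.smul_apply, smul_eq_mul]
    rw [hDu]
    have hexp : (1:ℝ) - q - 1 = -q := by ring
    rw [hexp]
    ring
  -- the pointwise estimate
  have hpt : ∀ r : ℝ, q ≤ r → r + 1 ≤ (n:ℝ) → ∀ x ∈ Ω,
      ‖gradient u x‖ ^ (r - 2) * (inner ℝ (gradient u x) (gradient φ x) : ℝ) ≤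
        (closedBall x₀ (3/2*R)).indicator
          (fun _ => Bconst q r n * M ^ (r - q) * (K/R) ^ r) x := by
    intro r hqr hrn x hx
    have hr1 : 1 < r := lt_of_lt_of_le hq1 hqr
    have hB := Bconst_nonneg hq1 hr1 n
    have hKR : (0:ℝ) < K / R := div_pos hKpos hR0
    have hDnn : (0:ℝ) ≤ Bconst q r n * M ^ (r - q) * (K/R) ^ r := by
      have h1 := Real.rpow_nonneg hMpos.le (r - q)
      have h2 := Real.rpow_nonneg hKR.le r
      positivity
    by_cases hxt : x ∈ tsupport η
    · have hmem : x ∈ closedBall x₀ (3/2*R) := hηts hxt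
      rw [Set.indicator_of_mem hmem, hinner x hx]
      have hpair : fderiv ℝ η x (gradient u x) ≤ (K / R) * ‖gradient u x‖ := by
        calc fderiv ℝ η x (gradient u x) ≤ ‖fderiv ℝ η x (gradient u x)‖ :=
              le_abs_self _
          _ ≤ ‖fderiv ℝ η x‖ * ‖gradient u x‖ := ContinuousLinearMap.le_opNorm _ _
          _ ≤ (K / R) * ‖gradient u x‖ :=
              mul_le_mul_of_nonneg_right (hηderiv x) (norm_nonneg _)
      exact pointwise_est hq1 hqr hrn (hupos x hx) (hMle x hx) (hηnn x) (hηle1 x)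
        (norm_nonneg _) hKR hpair
    · have hev : φ =ᶠ[nhds x] fun _ => (0:ℝ) := by
        filter_upwards [(isClosed_tsupport η).isOpen_compl.mem_nhds hxt] with y hy
        have h0 : η y = 0 := image_eq_zero_of_notMem_tsupport hy
        simp [hφdef, h0, hnne]
      have hfd0 : fderiv ℝ φ x = 0 := by
        rw [hev.fderiv_eq]
        exact fderiv_const_apply 0
      have hgrad0 : gradient φ x = 0 := by
        simp [gradient, hfd0]
      rw [hgrad0, inner_zero_right, mul_zero]
      exact Set.indicator_nonneg (fun _ _ => hDnn) x
  -- the integrand on the left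
  set F : EuclideanSpace ℝ (Fin N) → ℝ := fun x => u x ^ (s - 1) * φ x with hFdef
  have hFcont : Continuous F := by
    rw [continuous_iff_continuousAt]
    intro x
    by_cases hx : x ∈ tsupport η
    · have hxΩ : x ∈ Ω := hηtsΩ hx
      have hux : ContinuousAt u x := (hu.contDiffAt (hΩopen.mem_nhds hxΩ)).continuousAt
      exact (hux.rpow_const (Or.inl (hupos x hxΩ).ne')).mul hφC1.continuous.continuousAt
    · have hev : F =ᶠ[nhds x] fun _ => (0:ℝ) := by
        filter_upwards [(isClosed_tsupport η).isOpen_compl.mem_nhds hx] with y hy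
        have h0 : η y = 0 := image_eq_zero_of_notMem_tsupport hy
        simp [hFdef, hφdef, h0, hnne]
      exact hev.continuousAt
  have hFcs : HasCompactSupport F := hφcs.mul_left
  have hFint : Integrable F := hFcont.integrable_of_hasCompactSupport hFcs
  have hFnn : ∀ x, 0 ≤ F x := by
    intro x
    by_cases hx : x ∈ Function.support φ
    · have hxΩ : x ∈ Ω := htsφΩ (subset_closure hx)
      exact mul_nonneg (Real.rpow_nonneg (hupos x hxΩ).le _) (hφnn x)
    · have h0 : φ x = 0 := Function.notMem_support.mp hx
      simp [hFdef, h0]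
  have hsuper' := hsuper φ hφC1 hφcs htsφΩ hφnn
  have hball2 : ball x₀ R ⊆ Ω := fun y hy =>
    hsub (ball_subset_ball (by linarith) hy)
  -- lower bound: the integral over the small ball
  have hlow : ∫ x in ball x₀ R, u x ^ (s - q) ≤ ∫ x in Ω, F x := by
    have h1 : ∫ x in ball x₀ R, u x ^ (s - q) = ∫ x in ball x₀ R, F x := by
      apply setIntegral_congr_fun measurableSet_ball
      intro x hx
      have hxΩ : x ∈ Ω := hball2 hx
      have hη1 : η x = 1 := hηone x (ball_subset_closedBall hx)
      have hu0 : 0 < u x := hupos x hxΩ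
      simp only [hFdef, hφdef, hη1, one_pow, mul_one]
      rw [← Real.rpow_add hu0]
      congr 1
      ring
    rw [h1]
    exact setIntegral_mono_set hFint.integrableOn (ae_of_all _ hFnn)
      (HasSubset.Subset.eventuallyLE hball2)
  -- upper bound for each of the two integrals
  have hup : ∀ r : ℝ, q ≤ r → r + 1 ≤ (n:ℝ) →
      (∫ x in Ω, ‖gradient u x‖ ^ (r - 2) * (inner ℝ (gradient u x) (gradient φ x) : ℝ))
        ≤ Bconst q r n * M ^ (r - q) * (K/R) ^ r * ((3/2*R) ^ N * cN) := by
    intro r hqr hrn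
    have hr1 : 1 < r := lt_of_lt_of_le hq1 hqr
    have hKR : (0:ℝ) < K / R := div_pos hKpos hR0
    have hB := Bconst_nonneg hq1 hr1 n
    have hDnn : (0:ℝ) ≤ Bconst q r n * M ^ (r - q) * (K/R) ^ r := by
      have h1 := Real.rpow_nonneg hMpos.le (r - q)
      have h2 := Real.rpow_nonneg hKR.le r
      positivity
    set D : ℝ := Bconst q r n * M ^ (r - q) * (K/R) ^ r with hDdef
    have hψint : Integrable ((closedBall x₀ (3/2*R)).indicator (fun _ => D)) := by
      rw [integrable_indicator_iff measurableSet_closedBall]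
      exact integrableOn_const measure_closedBall_lt_top.ne
    have hvol : (volume (closedBall x₀ (3/2*R))).toReal = (3/2*R) ^ N * cN := by
      rw [Measure.addHaar_closedBall _ _ (by positivity : (0:ℝ) ≤ 3/2*R)]
      rw [ENNReal.toReal_mul, ENNReal.toReal_ofReal (by positivity)]
      congr 2
      exact finrank_euclideanSpace_fin
    have hψΩ : ∫ x in Ω, (closedBall x₀ (3/2*R)).indicator (fun _ => D) x
        ≤ D * ((3/2*R) ^ N * cN) := by
      have h2 : ∫ x in Ω, (closedBall x₀ (3/2*R)).indicator (fun _ => D) x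
          ≤ ∫ x, (closedBall x₀ (3/2*R)).indicator (fun _ => D) x :=
        setIntegral_le_integral hψint
          (ae_of_all _ (Set.indicator_nonneg (fun _ _ => hDnn)))
      have h3 : ∫ x, (closedBall x₀ (3/2*R)).indicator (fun _ => D) x =
          (volume (closedBall x₀ (3/2*R))).toReal • D :=
        integral_indicator_const D measurableSet_closedBall
      rw [h3, hvol, smul_eq_mul] at h2
      calc ∫ x in Ω, (closedBall x₀ (3/2*R)).indicator (fun _ => D) x
          ≤ (3/2*R) ^ N * cN * D := h2
        _ = D * ((3/2*R) ^ N * cN) := by ring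
    by_cases hint : IntegrableOn
        (fun x => ‖gradient u x‖ ^ (r - 2) * (inner ℝ (gradient u x) (gradient φ x) : ℝ)) Ω
    · calc (∫ x in Ω, ‖gradient u x‖ ^ (r - 2) * (inner ℝ (gradient u x) (gradient φ x) : ℝ))
          ≤ ∫ x in Ω, (closedBall x₀ (3/2*R)).indicator (fun _ => D) x :=
            setIntegral_mono_on hint hψint.integrableOn hΩopen.measurableSet
              (hpt r hqr hrn)
        _ ≤ D * ((3/2*R) ^ N * cN) := hψΩ
    · rw [integral_undef hint]
      positivity
  have hIp := hup p (le_of_lt hqp) (by linarith)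
  have hIq := hup q le_rfl hnq
  -- arithmetic: convert the right-hand sides
  have harith : ∀ r : ℝ, q ≤ r → ∀ A : ℝ, 0 ≤ A →
      A * (K/R) ^ r * ((3/2*R) ^ N * cN) ≤ A * K ^ r * (2 ^ N * cN) * R ^ ((N:ℝ) - q) := by
    intro r hqr A hA
    have hKr : (0:ℝ) ≤ K ^ r := Real.rpow_nonneg hKpos.le _
    have hRr : (0:ℝ) < R ^ r := Real.rpow_pos_of_pos hR0 _
    have h0 : (K/R) ^ r = K ^ r / R ^ r := Real.div_rpow hKpos.le hR0.le r
    have h1 : ((3:ℝ)/2*R) ^ N ≤ 2 ^ N * R ^ N := by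
      rw [← mul_pow]
      exact pow_le_pow_left₀ (by positivity) (by linarith) N
    have h2 : (R:ℝ) ^ N = R ^ ((N:ℝ)) := (Real.rpow_natCast R N).symm
    have h3 : R ^ ((N:ℝ)) / R ^ r = R ^ ((N:ℝ) - r) := (Real.rpow_sub hR0 _ _).symm
    have h4 : R ^ ((N:ℝ) - r) ≤ R ^ ((N:ℝ) - q) :=
      Real.rpow_le_rpow_of_exponent_le hR (by linarith)
    calc A * (K/R) ^ r * ((3/2*R) ^ N * cN)
        ≤ A * (K/R) ^ r * ((2 ^ N * R ^ N) * cN) := by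
          apply mul_le_mul_of_nonneg_left _ (by positivity)
          exact mul_le_mul_of_nonneg_right h1 hcNnn
      _ = A * K ^ r * (2 ^ N * cN) * (R ^ ((N:ℝ)) / R ^ r) := by
          rw [h0, ← h2]; ring
      _ = A * K ^ r * (2 ^ N * cN) * R ^ ((N:ℝ) - r) := by rw [h3]
      _ ≤ A * K ^ r * (2 ^ N * cN) * R ^ ((N:ℝ) - q) := by
          apply mul_le_mul_of_nonneg_left h4 (by positivity)
  have hAp : (0:ℝ) ≤ Bconst q p n * M ^ (p - q) := by
    have h1 := Bconst_nonneg hq1 hp1 n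
    have h2 := Real.rpow_nonneg hMpos.le (p - q)
    positivity
  have hAq : (0:ℝ) ≤ Bconst q q n * M ^ (q - q) := by
    have h1 := Bconst_nonneg hq1 hq1 n
    have h2 := Real.rpow_nonneg hMpos.le (q - q)
    positivity
  have hap := harith p (le_of_lt hqp) _ hAp
  have haq := harith q le_rfl _ hAq
  have hRNq : (0:ℝ) < R ^ ((N:ℝ) - q) := Real.rpow_pos_of_pos hR0 _
  calc ∫ x in ball x₀ R, u x ^ (s - q)
      ≤ ∫ x in Ω, F x := hlow
    _ ≤ (∫ x in Ω, ‖gradient u x‖ ^ (p - 2) * (inner ℝ (gradient u x) (gradient φ x) : ℝ)) +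
        ∫ x in Ω, ‖gradient u x‖ ^ (q - 2) * (inner ℝ (gradient u x) (gradient φ x) : ℝ) :=
          hsuper'
    _ ≤ Bconst q p n * M ^ (p - q) * (K/R) ^ p * ((3/2*R) ^ N * cN) +
        Bconst q q n * M ^ (q - q) * (K/R) ^ q * ((3/2*R) ^ N * cN) := by
          exact add_le_add hIp hIq
    _ ≤ Bconst q p n * M ^ (p - q) * K ^ p * (2 ^ N * cN) * R ^ ((N:ℝ) - q) +
        Bconst q q n * M ^ (q - q) * K ^ q * (2 ^ N * cN) * R ^ ((N:ℝ) - q) := by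
          have e1 : Bconst q p n * M ^ (p - q) * (K/R) ^ p * ((3/2*R) ^ N * cN) ≤
              Bconst q p n * M ^ (p - q) * K ^ p * (2 ^ N * cN) * R ^ ((N:ℝ) - q) := by
            have := hap
            calc Bconst q p n * M ^ (p - q) * (K/R) ^ p * ((3/2*R) ^ N * cN)
                = Bconst q p n * M ^ (p - q) * (K/R) ^ p * ((3/2*R) ^ N * cN) := rfl
              _ ≤ _ := by linarith [hap]
          have e2 : Bconst q q n * M ^ (q - q) * (K/R) ^ q * ((3/2*R) ^ N * cN) ≤
              Bconst q q n * M ^ (q - q) * K ^ q * (2 ^ N * cN) * R ^ ((N:ℝ) - q) := by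
            linarith [haq]
          exact add_le_add e1 e2
    _ = (Tp + Tq) * R ^ ((N:ℝ) - q) := by rw [hTpdef, hTqdef]; ring
    _ ≤ (Tp + Tq + 1) * R ^ ((N:ℝ) - q) := by nlinarith [hRNq.le]
end
end
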